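/- arXiv:math/0502563 — 3 statements merged into one kernel-verified Lean document; each statement's English description precedes it below -/
import Mathlib

section
/- Let (W,S) be a Coxeter system with S finite and Coxeter matrix m, and let T ⊆ S be such that for every t ∈ T and s ∈ S∖T the exponent m_{st} is even or ∞. Assume the standard parabolic subgroup W_{S∖T} is finite. Let φ : S → I be an allowable partition of S with φ⁻¹(x₀) = S∖T for a distinguished element x₀ ∈ I. Then for every function d : I∖{x₀} → ℕ, the set {w ∈ W : ℓ_{φ⁻¹(x)}(w) = d(x) for all x ∈ I∖{x₀}} is finite and its cardinality equals #W_{S∖T} times the cardinality of the set {u ∈ ker φ_T : ℓ_{φ⁻¹(x)}(u) = d(x) for all x ∈ I∖{x₀}}. -/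
open List

namespace CoxAux

attribute [local instance] Classical.propDecidable

variable {B W I : Type*} [Group W] {M : CoxeterMatrix B} (cs : CoxeterSystem M W)

/-- The sign map used to prove that letter counts are well defined. -/
noncomputable def sgn (i : B) : Function.End (W × ZMod 2) :=
  fun q => (cs.simple i * q.1 * cs.simple i, q.2 + if q.1 = cs.simple i then 1 else 0)

lemma simple_alt (i j : B) (n : ℕ) :
    cs.simple i * (cs.simple j * cs.simple i) ^ n
      = (cs.simple i * cs.simple j) ^ n * cs.simple i := by
  induction n with
  | zero => simp
  | succ n ih =>
    rw [pow_succ, pow_succ, ← mul_assoc, ← mul_assoc, ih]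
    group

lemma sgn_pow (i j : B) (n : ℕ) (t : W) (ε : ZMod 2) :
    (((sgn cs i * sgn cs j) ^ n) : Function.End (W × ZMod 2)) (t, ε) =
      ((cs.simple i * cs.simple j) ^ n * t * (cs.simple j * cs.simple i) ^ n,
        ε + ∑ k ∈ Finset.range (2 * n),
          if t = (cs.simple j * cs.simple i) ^ k * cs.simple j then 1 else 0) := by
  induction n with
  | zero =>
    show ((t : W), ε) = _
    simp
  | succ n ih =>
    set si := cs.simple i with hsi
    set sj := cs.simple j with hsj
    set u := (si * sj) ^ n with hu
    set v := (sj * si) ^ n with hvdef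
    have hss : sj * sj = 1 := cs.simple_mul_simple_self j
    have hss' : si * si = 1 := cs.simple_mul_simple_self i
    have hvinv : v = u⁻¹ := by
      rw [hu, hvdef, ← inv_pow, mul_inv_rev, cs.inv_simple, cs.inv_simple]
    have huv : u * v = 1 := by rw [hvinv, mul_inv_cancel]
    have hvu : v * u = 1 := by rw [hvinv, inv_mul_cancel]
    have hsju : sj * u = v * sj := by rw [hu, hvdef]; exact simple_alt cs j i n
    have hsiv : si * v = u * si := by rw [hu, hvdef]; exact simple_alt cs i j n
    have hveq : sj * (u * sj) = v := by rw [← mul_assoc, hsju, mul_assoc, hss, mul_one]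
    have hsjv : sj * v = u * sj := by rw [← hveq, ← mul_assoc, hss, one_mul]
    have hueq : si * (v * si) = u := by rw [← mul_assoc, hsiv, mul_assoc, hss', mul_one]
    have hsiu : si * u = v * si := by rw [← hueq, ← mul_assoc, hss', one_mul]
    have huvz : ∀ z : W, u * (v * z) = z := fun z => by rw [← mul_assoc, huv, one_mul]
    have hvuz : ∀ z : W, v * (u * z) = z := fun z => by rw [← mul_assoc, hvu, one_mul]
    have hsjvz : ∀ z : W, sj * (v * z) = u * (sj * z) := fun z => by
      rw [← mul_assoc, hsjv, mul_assoc]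
    have hssz : ∀ z : W, sj * (sj * z) = z := fun z => by rw [← mul_assoc, hss, one_mul]
    -- the two key identities
    have e1 : u * ((sj * si) ^ (2 * n) * sj) * v = sj := by
      have h2n : (sj * si) ^ (2 * n) = v * v := by rw [hvdef, two_mul, pow_add]
      rw [h2n]
      simp only [mul_assoc]
      rw [huvz, hsjv, hvuz]
    have e2 : sj * (u * ((sj * si) ^ (2 * n + 1) * sj) * v) * sj = si := by
      have h2n1 : (sj * si) ^ (2 * n + 1) = v * (v * (sj * si)) := by
        rw [hvdef, two_mul, pow_add, pow_add, pow_one, mul_assoc]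
      rw [h2n1]
      simp only [mul_assoc]
      rw [huvz, hsjvz, hssz, hsjvz, hss, mul_one, hsiu, huvz]
    have c1 : (u * t * v = sj) ↔ (t = (sj * si) ^ (2 * n) * sj) := by
      constructor
      · intro hh
        have : u * t * v = u * ((sj * si) ^ (2 * n) * sj) * v := by rw [hh, e1]
        exact mul_left_cancel (mul_right_cancel this)
      · intro hh; rw [hh]; exact e1
    have c2 : (sj * (u * t * v) * sj = si) ↔ (t = (sj * si) ^ (2 * n + 1) * sj) := by
      constructor
      · intro hh
        have h3 : sj * (u * t * v) * sj
            = sj * (u * ((sj * si) ^ (2 * n + 1) * sj) * v) * sj := by rw [hh, e2]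
        have h4 := mul_left_cancel (mul_right_cancel h3)
        exact mul_left_cancel (mul_right_cancel h4)
      · intro hh; rw [hh]; exact e2
    rw [pow_succ']
    show (sgn cs i * sgn cs j) ((((sgn cs i * sgn cs j) ^ n) :
        Function.End (W × ZMod 2)) (t, ε)) = _
    rw [ih]
    show (si * (sj * (u * t * v) * sj) * si,
        ε + (∑ k ∈ Finset.range (2 * n), if t = (sj * si) ^ k * sj then 1 else 0)
          + (if u * t * v = sj then 1 else 0)
          + (if sj * (u * t * v) * sj = si then 1 else 0)) = _
    have hrange : 2 * (n + 1) = (2 * n) + 1 + 1 := by ring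
    rw [hrange, Finset.sum_range_succ, Finset.sum_range_succ]
    refine Prod.ext ?_ ?_
    · show si * (sj * (u * t * v) * sj) * si = (si * sj) ^ (n + 1) * t * (sj * si) ^ (n + 1)
      rw [pow_succ', pow_succ, ← hu, ← hvdef]
      simp only [mul_assoc]
    · show ε + _ + _ + _ = ε + _
      rw [if_congr c1 rfl rfl, if_congr c2 rfl rfl]
      ring

lemma sgn_liftable : M.IsLiftable (fun i => sgn cs i) := by
  intro i j
  funext q
  obtain ⟨t, ε⟩ := q
  show (((sgn cs i * sgn cs j) ^ M i j) : Function.End (W × ZMod 2)) (t, ε) = (t, ε)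
  rw [sgn_pow]
  rw [cs.simple_mul_simple_pow i j, cs.simple_mul_simple_pow' i j]
  have hsum : ∑ k ∈ Finset.range (2 * M i j),
      (if t = (cs.simple j * cs.simple i) ^ k * cs.simple j then (1 : ZMod 2) else 0) = 0 := by
    rw [two_mul, Finset.sum_range_add]
    have hper : ∀ k, (if t = (cs.simple j * cs.simple i) ^ (M i j + k) * cs.simple j
        then (1 : ZMod 2) else 0)
        = (if t = (cs.simple j * cs.simple i) ^ k * cs.simple j then (1 : ZMod 2) else 0) := by
      intro k
      rw [pow_add, cs.simple_mul_simple_pow' i j, one_mul]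
    rw [Finset.sum_congr rfl (fun k _ => hper k), ← Finset.sum_add_distrib]
    rw [Finset.sum_congr rfl (fun k _ => CharTwo.add_self_eq_zero _), Finset.sum_const_zero]
  rw [hsum]
  simp

/-- The sign homomorphism. -/
noncomputable def mu : W →* Function.End (W × ZMod 2) :=
  cs.lift ⟨fun i => sgn cs i, sgn_liftable cs⟩

lemma mu_apply_word (ω : List B) (t : W) (ε : ZMod 2) :
    mu cs (cs.wordProd ω) (t, ε) =
      (cs.wordProd ω * t * (cs.wordProd ω)⁻¹,
        ε + ((cs.rightInvSeq ω).count t : ZMod 2)) := by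
  induction ω generalizing ε with
  | nil =>
    rw [cs.wordProd_nil, map_one]
    show ((t : W), ε) = _
    simp
  | cons i ω ih =>
    rw [cs.wordProd_cons, map_mul]
    have hlift : mu cs (cs.simple i) = sgn cs i := cs.lift_apply_simple (sgn_liftable cs) i
    show (mu cs (cs.simple i)) ((mu cs (cs.wordProd ω)) (t, ε)) = _
    rw [ih, hlift]
    set a := cs.wordProd ω with ha
    have hris : cs.rightInvSeq (i :: ω) = (a⁻¹ * cs.simple i * a) :: cs.rightInvSeq ω := rfl
    have hcond : ((a⁻¹ * cs.simple i * a == t) = true) ↔ (a * t * a⁻¹ = cs.simple i) := by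
      rw [beq_iff_eq]
      constructor
      · intro h; rw [← h]; group
      · intro h; rw [← h]; group
    refine Prod.ext ?_ ?_
    · show cs.simple i * (a * t * a⁻¹) * cs.simple i
        = cs.simple i * a * t * (cs.simple i * a)⁻¹
      rw [mul_inv_rev, cs.inv_simple]
      group
    · show ε + ((cs.rightInvSeq ω).count t : ZMod 2)
          + (if a * t * a⁻¹ = cs.simple i then 1 else 0)
        = ε + ((cs.rightInvSeq (i :: ω)).count t : ZMod 2)
      rw [hris, List.count_cons, Nat.cast_add, Nat.cast_ite, Nat.cast_one, Nat.cast_zero]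
      rw [if_congr hcond rfl rfl]
      ring

lemma count_ris_parity {ω ω' : List B} (h : cs.wordProd ω = cs.wordProd ω') (t : W) :
    (((cs.rightInvSeq ω).count t : ZMod 2)) = ((cs.rightInvSeq ω').count t : ZMod 2) := by
  have h1 := mu_apply_word cs ω t 0
  have h2 := mu_apply_word cs ω' t 0
  rw [h] at h1
  rw [h1] at h2
  have := congrArg Prod.snd h2
  simpa using this

lemma mem_ris_iff {ω ω' : List B} (hω : cs.IsReduced ω) (hω' : cs.IsReduced ω')
    (h : cs.wordProd ω = cs.wordProd ω') (t : W) :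
    t ∈ cs.rightInvSeq ω ↔ t ∈ cs.rightInvSeq ω' := by
  have hc := count_ris_parity cs h t
  have hle : (cs.rightInvSeq ω).count t ≤ 1 :=
    List.nodup_iff_count_le_one.mp hω.nodup_rightInvSeq t
  have hle' : (cs.rightInvSeq ω').count t ≤ 1 :=
    List.nodup_iff_count_le_one.mp hω'.nodup_rightInvSeq t
  have heq : (cs.rightInvSeq ω).count t = (cs.rightInvSeq ω').count t := by
    have h2 : (cs.rightInvSeq ω).count t % 2 = (cs.rightInvSeq ω').count t % 2 :=
      (ZMod.natCast_eq_natCast_iff _ _ _).mp hc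
    omega
  rw [← List.count_pos_iff, ← List.count_pos_iff, heq]

lemma ris_toFinset_eq {ω ω' : List B} (hω : cs.IsReduced ω) (hω' : cs.IsReduced ω')
    (h : cs.wordProd ω = cs.wordProd ω') :
    (cs.rightInvSeq ω).toFinset = (cs.rightInvSeq ω').toFinset := by
  ext t
  simp only [List.mem_toFinset]
  exact mem_ris_iff cs hω hω' h t

lemma countP_eq_card_filter_toFinset {α : Type*} [DecidableEq α] {l : List α} (hl : l.Nodup)
    (q : α → Bool) :
    l.countP q = (l.toFinset.filter (fun t => q t)).card := by
  rw [List.countP_eq_length_filter, ← List.toFinset_card_of_nodup (hl.filter q),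
    List.toFinset_filter]

variable [DecidableEq I]

lemma countP_ris_eq (p : B → I)
    (hallow : ∀ s s' : B, IsConj (cs.simple s) (cs.simple s') → p s = p s')
    (x : I) (ω : List B) :
    (cs.rightInvSeq ω).countP
        (fun t => decide (∃ j, p j = x ∧ IsConj (cs.simple j) t))
      = ω.countP (fun i => decide (p i = x)) := by
  induction ω with
  | nil => rfl
  | cons i ω ih =>
    have hris : cs.rightInvSeq (i :: ω)
        = ((cs.wordProd ω)⁻¹ * cs.simple i * cs.wordProd ω) :: cs.rightInvSeq ω := rfl
    rw [hris, List.countP_cons, List.countP_cons, ih]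
    congr 1
    have hconj : IsConj (cs.simple i) ((cs.wordProd ω)⁻¹ * cs.simple i * cs.wordProd ω) := by
      rw [isConj_iff]
      exact ⟨(cs.wordProd ω)⁻¹, by group⟩
    have hiff : (∃ j, p j = x ∧ IsConj (cs.simple j)
        ((cs.wordProd ω)⁻¹ * cs.simple i * cs.wordProd ω)) ↔ p i = x := by
      constructor
      · rintro ⟨j, hj, hc⟩
        have : IsConj (cs.simple j) (cs.simple i) := hc.trans hconj.symm
        rw [← hj]
        exact (hallow j i this).symm
      · intro hpi
        exact ⟨i, hpi, hconj⟩
    simp only [decide_eq_true_eq]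
    exact if_congr hiff rfl rfl

lemma countP_letters_eq (p : B → I)
    (hallow : ∀ s s' : B, IsConj (cs.simple s) (cs.simple s') → p s = p s')
    {ω ω' : List B} (hω : cs.IsReduced ω) (hω' : cs.IsReduced ω')
    (h : cs.wordProd ω = cs.wordProd ω') (x : I) :
    ω.countP (fun i => decide (p i = x)) = ω'.countP (fun i => decide (p i = x)) := by
  rw [← countP_ris_eq cs p hallow x ω, ← countP_ris_eq cs p hallow x ω']
  rw [countP_eq_card_filter_toFinset hω.nodup_rightInvSeq,
    countP_eq_card_filter_toFinset hω'.nodup_rightInvSeq,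
    ris_toFinset_eq cs hω hω' h]

/-- The number of letters from the fiber `p⁻¹(x)` in any reduced word for `w`. -/
noncomputable def cfun (p : B → I) (x : I) (w : W) : ℕ :=
  (cs.exists_reduced_word' w).choose.countP (fun i => decide (p i = x))

lemma cfun_spec (p : B → I)
    (hallow : ∀ s s' : B, IsConj (cs.simple s) (cs.simple s') → p s = p s')
    {ω : List B} (hω : cs.IsReduced ω) (x : I) :
    cfun cs p x (cs.wordProd ω) = ω.countP (fun i => decide (p i = x)) := by
  obtain ⟨hred, heq⟩ := (cs.exists_reduced_word' (cs.wordProd ω)).choose_spec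
  exact countP_letters_eq cs p hallow hred hω heq.symm x

lemma cfun_mul_simple_asc (p : B → I)
    (hallow : ∀ s s' : B, IsConj (cs.simple s) (cs.simple s') → p s = p s')
    {x : I} {i : B} (hpi : p i ≠ x) (w : W)
    (h : cs.length (w * cs.simple i) = cs.length w + 1) :
    cfun cs p x (w * cs.simple i) = cfun cs p x w := by
  obtain ⟨ν, hν, hw⟩ := cs.exists_reduced_word' w
  have hν' : cs.length (cs.wordProd ν) = ν.length := hν
  have hprod : cs.wordProd (ν ++ [i]) = w * cs.simple i := by
    rw [cs.wordProd_append, cs.wordProd_singleton, ← hw]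
  have hred2 : cs.IsReduced (ν ++ [i]) := by
    show cs.length (cs.wordProd (ν ++ [i])) = (ν ++ [i]).length
    rw [hprod, h, List.length_append, List.length_singleton, hw, hν']
  rw [← hprod, hw, cfun_spec cs p hallow hred2, cfun_spec cs p hallow hν]
  rw [List.countP_append]
  simp [hpi]

lemma cfun_mul_simple (p : B → I)
    (hallow : ∀ s s' : B, IsConj (cs.simple s) (cs.simple s') → p s = p s')
    {x : I} {i : B} (hpi : p i ≠ x) (w : W) :
    cfun cs p x (w * cs.simple i) = cfun cs p x w := by
  rcases cs.length_mul_simple w i with h | h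
  · exact cfun_mul_simple_asc cs p hallow hpi w h
  · have hw1 : cs.length w ≥ 1 := by
      by_contra hc
      have h0 : cs.length w = 0 := by omega
      have hw1' : w = 1 := cs.length_eq_zero_iff.mp h0
      rw [hw1', one_mul, cs.length_simple i, cs.length_one] at h
      omega
    set w' := w * cs.simple i with hw'
    have hback : w = w' * cs.simple i := by
      rw [hw', mul_assoc, cs.simple_mul_simple_self, mul_one]
    have h' : cs.length (w' * cs.simple i) = cs.length w' + 1 := by
      have hl2 : cs.length (w' * cs.simple i) = cs.length w := by rw [← hback]
      rw [hl2, h]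
    have := cfun_mul_simple_asc cs p hallow hpi w' h'
    rw [← hback] at this
    exact this.symm

lemma cfun_mul_closure (p : B → I)
    (hallow : ∀ s s' : B, IsConj (cs.simple s) (cs.simple s') → p s = p s')
    (T : Set B) (x₀ : I) (hfiber : {s : B | p s = x₀} = Tᶜ)
    {x : I} (hx : x ≠ x₀)
    {v : W} (hv : v ∈ Subgroup.closure (cs.simple '' Tᶜ)) (w : W) :
    cfun cs p x (w * v) = cfun cs p x w := by
  induction hv using Subgroup.closure_induction generalizing w with
  | mem g hg =>
    obtain ⟨i, hiT, rfl⟩ := hg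
    have hpi : p i = x₀ := by
      have : i ∈ {s : B | p s = x₀} := by rw [hfiber]; exact hiT
      exact this
    exact cfun_mul_simple cs p hallow (by rw [hpi]; exact fun hc => hx hc.symm) w
  | one => rw [mul_one]
  | mul a b _ _ ha hb => rw [← mul_assoc, hb (w * a), ha w]
  | inv a _ ha =>
    have := ha (w * a⁻¹)
    rw [mul_assoc, inv_mul_cancel, mul_one] at this
    exact this.symm

lemma wordProd_mem_closure (T : Set B) {ω : List B} (hall : ∀ i ∈ ω, i ∉ T) :
    cs.wordProd ω ∈ Subgroup.closure (cs.simple '' Tᶜ) := by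
  show (ω.map cs.simple).prod ∈ _
  apply Subgroup.list_prod_mem
  intro g hg
  obtain ⟨i, hi, rfl⟩ := List.mem_map.mp hg
  exact Subgroup.subset_closure ⟨i, hall i hi, rfl⟩

lemma run_lt (T : Set B) (hfin : (Subgroup.closure (cs.simple '' Tᶜ) : Set W).Finite)
    {ω : List B} (hred : cs.IsReduced ω) (hall : ∀ i ∈ ω, i ∉ T) :
    ω.length < hfin.toFinset.card := by
  have hmem : ∀ r ∈ Finset.range (ω.length + 1),
      cs.wordProd (ω.take r) ∈ hfin.toFinset := by
    intro r _
    rw [Set.Finite.mem_toFinset]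
    exact wordProd_mem_closure cs T (fun i hi => hall i (List.mem_of_mem_take hi))
  have hinj : Set.InjOn (fun r => cs.wordProd (ω.take r))
      ↑(Finset.range (ω.length + 1)) := by
    intro r₁ h₁ r₂ h₂ heq
    simp only [Finset.coe_range, Set.mem_Iio] at h₁ h₂
    have hl : ∀ r, r < ω.length + 1 → cs.length (cs.wordProd (ω.take r)) = r := by
      intro r hr
      have h1 : cs.length (cs.wordProd (ω.take r)) = (ω.take r).length :=
        hred.take r
      rw [h1, List.length_take]
      omega
    have := congrArg cs.length heq
    rw [hl r₁ h₁, hl r₂ h₂] at this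
    exact this
  have := Finset.card_le_card_of_injOn _ hmem hinj
  rw [Finset.card_range] at this
  omega

lemma lenbound (T : Set B) (hfin : (Subgroup.closure (cs.simple '' Tᶜ) : Set W).Finite) :
    ∀ n (ω : List B), ω.length ≤ n → cs.IsReduced ω →
      ω.length ≤ hfin.toFinset.card * (ω.countP (fun i => decide (i ∈ T)) + 1) := by
  intro n
  induction n with
  | zero =>
    intro ω hlen _
    exact le_trans hlen (Nat.zero_le _)
  | succ n ih =>
    intro ω hlen hred
    set N := hfin.toFinset.card with hN
    by_cases hT : ∀ i ∈ ω, i ∉ T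
    · have hlt := run_lt cs T hfin hred hT
      have hge : N * 1 ≤ N * (ω.countP (fun i => decide (i ∈ T)) + 1) :=
        Nat.mul_le_mul_left N (by omega)
      calc ω.length ≤ N := Nat.le_of_lt hlt
        _ = N * 1 := (Nat.mul_one N).symm
        _ ≤ _ := hge
    · push_neg at hT
      set q : B → Bool := fun i => decide (i ∉ T) with hq
      set tw := ω.takeWhile q with htw
      set dw := ω.dropWhile q with hdw
      have hsplit : tw ++ dw = ω := List.takeWhile_append_dropWhile (p := q) (l := ω)
      have hdw_ne : dw ≠ [] := by
        intro hnil
        obtain ⟨i, hiω, hiT⟩ := hT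
        have hmem : i ∈ tw ++ dw := by rw [hsplit]; exact hiω
        rw [hnil, List.append_nil, htw] at hmem
        have := List.mem_takeWhile_imp hmem
        rw [hq] at this
        simp only [decide_eq_true_eq] at this
        exact this hiT
      obtain ⟨hd, tl, hcons⟩ := List.exists_cons_of_ne_nil hdw_ne
      have hcons' : ω.dropWhile q = hd :: tl := by rw [← hdw]; exact hcons
      have hhd : hd ∈ T := by
        have hh := List.head?_dropWhile_not q ω
        rw [hcons'] at hh
        simp only [List.head?_cons] at hh
        rw [hq] at hh
        simp only [decide_eq_false_iff_not, not_not] at hh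
        exact hh
      have hω_eq : ω = tw ++ hd :: tl := by rw [← hsplit, hcons]
      have hred_tw : cs.IsReduced tw := by
        have h1 := hred.take tw.length
        rw [hω_eq, List.take_left] at h1
        exact h1
      have hred_tl : cs.IsReduced tl := by
        have h1 := hred.drop (tw.length + 1)
        have h2 : ω.drop (tw.length + 1) = tl := by
          rw [hω_eq, ← List.drop_drop, List.drop_left]
          simp
        rwa [h2] at h1
      have htw_all : ∀ i ∈ tw, i ∉ T := by
        intro i hi
        have := List.mem_takeWhile_imp hi
        rw [hq] at this
        simpa using this
      have htw_lt : tw.length < N := run_lt cs T hfin hred_tw htw_all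
      have hlen_eq : ω.length = tw.length + 1 + tl.length := by
        rw [hω_eq, List.length_append, List.length_cons]
        omega
      have htl_len : tl.length ≤ n := by omega
      have ihtl := ih tl htl_len hred_tl
      have hcount : ω.countP (fun i => decide (i ∈ T))
          = tl.countP (fun i => decide (i ∈ T)) + 1 := by
        rw [hω_eq, List.countP_append, List.countP_cons]
        have h0 : tw.countP (fun i => decide (i ∈ T)) = 0 := by
          rw [List.countP_eq_zero]
          intro a ha
          simp [htw_all a ha]
        rw [h0]
        simp [hhd]
      rw [hcount]
      calc ω.length = tw.length + 1 + tl.length := hlen_eq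
        _ ≤ N + tl.length := Nat.add_le_add_right (by omega) tl.length
        _ ≤ N + N * (tl.countP (fun i => decide (i ∈ T)) + 1) := Nat.add_le_add_left ihtl N
        _ = N * (tl.countP (fun i => decide (i ∈ T)) + 1 + 1) := by ring

end CoxAux

open CoxAux

/-- Let `S` be finite, `T ⊆ S` satisfy the evenness assumption, and suppose `W_{S∖T}` is finite.
Let `p : S → I` be an allowable partition (fibers closed under conjugacy of generators) with
`p⁻¹(x₀) = S∖T`. Then for every `d : I → ℕ`, the set of `w ∈ W` whose reduced words contain
exactly `d x` letters from the fiber `p⁻¹(x)` for every `x ≠ x₀` is finite, and its cardinality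
is `#W_{S∖T}` times the cardinality of the corresponding subset of `ker φ_T`. -/
theorem growth_specialization {B W I : Type*} [Group W] [Finite B] [DecidableEq I]
    (M : CoxeterMatrix B) (cs : CoxeterSystem M W) (T : Set B)
    (heven : ∀ t ∈ T, ∀ s ∉ T, Even (M t s))
    (hfin : (Subgroup.closure (cs.simple '' Tᶜ) : Set W).Finite)
    (φ : W →* W)
    (hφ₁ : ∀ s ∉ T, φ (cs.simple s) = cs.simple s)
    (hφ₂ : ∀ t ∈ T, φ (cs.simple t) = 1)
    (p : B → I) (x₀ : I)
    (hallow : ∀ s s' : B, IsConj (cs.simple s) (cs.simple s') → p s = p s')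
    (hfiber : {s : B | p s = x₀} = Tᶜ)
    (d : I → ℕ) :
    {w : W | ∀ ω : List B, cs.IsReduced ω → cs.wordProd ω = w →
        ∀ x : I, x ≠ x₀ → ω.countP (fun i => decide (p i = x)) = d x}.Finite ∧
    Nat.card {w : W | ∀ ω : List B, cs.IsReduced ω → cs.wordProd ω = w →
        ∀ x : I, x ≠ x₀ → ω.countP (fun i => decide (p i = x)) = d x} =
      Nat.card (Subgroup.closure (cs.simple '' Tᶜ)) *
      Nat.card {u : W | u ∈ φ.ker ∧ ∀ ω : List B, cs.IsReduced ω → cs.wordProd ω = u →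
        ∀ x : I, x ≠ x₀ → ω.countP (fun i => decide (p i = x)) = d x} := by
  classical
  have hFB : Fintype B := Fintype.ofFinite B
  have cond_iff : ∀ w : W,
      (∀ ω : List B, cs.IsReduced ω → cs.wordProd ω = w →
        ∀ x : I, x ≠ x₀ → ω.countP (fun i => decide (p i = x)) = d x) ↔
      (∀ x : I, x ≠ x₀ → cfun cs p x w = d x) := by
    intro w
    constructor
    · intro h x hx
      obtain ⟨ω, hω, hw⟩ := cs.exists_reduced_word' w
      rw [hw, cfun_spec cs p hallow hω x]
      exact h ω hω hw.symm x hx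
    · intro h ω hω hw x hx
      rw [← cfun_spec cs p hallow hω x, hw]
      exact h x hx
  set A : Set W := {w : W | ∀ x : I, x ≠ x₀ → cfun cs p x w = d x} with hA
  set K : Set W := {u : W | u ∈ φ.ker ∧ ∀ x : I, x ≠ x₀ → cfun cs p x u = d x} with hK
  have hAeq : {w : W | ∀ ω : List B, cs.IsReduced ω → cs.wordProd ω = w →
      ∀ x : I, x ≠ x₀ → ω.countP (fun i => decide (p i = x)) = d x} = A := by
    ext w; exact cond_iff w
  have hKeq : {u : W | u ∈ φ.ker ∧ ∀ ω : List B, cs.IsReduced ω → cs.wordProd ω = u →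
      ∀ x : I, x ≠ x₀ → ω.countP (fun i => decide (p i = x)) = d x} = K := by
    ext u; exact and_congr_right fun _ => cond_iff u
  rw [hAeq, hKeq]
  -- properties of φ
  have hidem : ∀ w : W, φ (φ w) = φ w := by
    have hcomp : φ.comp φ = φ := by
      apply cs.ext_simple
      intro i
      by_cases hi : i ∈ T
      · simp [MonoidHom.comp_apply, hφ₂ i hi]
      · simp [MonoidHom.comp_apply, hφ₁ i hi]
    intro w
    simpa using DFunLike.congr_fun hcomp w
  have himg : ∀ w : W, φ w ∈ Subgroup.closure (cs.simple '' Tᶜ) := by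
    intro w
    induction w using cs.simple_induction with
    | simple i =>
      by_cases hi : i ∈ T
      · rw [hφ₂ i hi]; exact Subgroup.one_mem _
      · rw [hφ₁ i hi]; exact Subgroup.subset_closure ⟨i, hi, rfl⟩
    | one => rw [map_one]; exact Subgroup.one_mem _
    | mul w₁ w₂ h₁ h₂ => rw [map_mul]; exact Subgroup.mul_mem _ h₁ h₂
  have hfix : ∀ v ∈ Subgroup.closure (cs.simple '' Tᶜ), φ v = v := by
    intro v hv
    induction hv using Subgroup.closure_induction with
    | mem g hg => obtain ⟨i, hi, rfl⟩ := hg; exact hφ₁ i hi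
    | one => exact map_one φ
    | mul a b _ _ ha hb => rw [map_mul, ha, hb]
    | inv a _ ha => rw [map_inv, ha]
  have hclosA : ∀ (w : W), w ∈ A → ∀ v ∈ Subgroup.closure (cs.simple '' Tᶜ), w * v ∈ A := by
    intro w hw v hv x hx
    rw [cfun_mul_closure cs p hallow T x₀ hfiber hx hv w]
    exact hw x hx
  let E : ↥(Subgroup.closure (cs.simple '' Tᶜ)) × ↥K ≃ ↥A :=
    { toFun := fun q => ⟨q.2.1 * q.1.1, by
        have hu : (q.2.1 : W) ∈ A := fun x hx => q.2.2.2 x hx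
        exact hclosA q.2.1 hu q.1.1 q.1.2⟩
      invFun := fun w => (⟨φ w.1, himg w.1⟩, ⟨w.1 * (φ w.1)⁻¹, by
        constructor
        · show w.1 * (φ w.1)⁻¹ ∈ φ.ker
          rw [MonoidHom.mem_ker, map_mul, map_inv, hidem, mul_inv_cancel]
        · intro x hx
          rw [cfun_mul_closure cs p hallow T x₀ hfiber hx
            (Subgroup.inv_mem _ (himg w.1)) w.1]
          exact w.2 x hx⟩)
      left_inv := by
        rintro ⟨⟨v, hv⟩, ⟨u, hu⟩⟩
        have hphi : φ (u * v) = v := by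
          rw [map_mul, hu.1, one_mul, hfix v hv]
        refine Prod.ext (Subtype.ext ?_) (Subtype.ext ?_)
        · exact hphi
        · show u * v * (φ (u * v))⁻¹ = u
          rw [hphi, mul_assoc, mul_inv_cancel, mul_one]
      right_inv := by
        rintro ⟨w, hw⟩
        refine Subtype.ext ?_
        show w * (φ w)⁻¹ * φ w = w
        rw [mul_assoc, inv_mul_cancel, mul_one] }
  constructor
  · -- finiteness
    set N := hfin.toFinset.card with hN
    set Fs := (Finset.univ.image p).erase x₀ with hFs
    set D := ∑ x ∈ Fs, d x with hD
    have hTcount : ∀ ω : List B, ω.countP (fun i => decide (i ∈ T))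
        = ∑ x ∈ Fs, ω.countP (fun i => decide (p i = x)) := by
      intro ω
      induction ω with
      | nil => simp
      | cons i ω ih =>
        rw [List.countP_cons, ih]
        have hstep : ∀ x ∈ Fs, List.countP (fun i => decide (p i = x)) (i :: ω)
            = ω.countP (fun i => decide (p i = x)) + if p i = x then 1 else 0 := by
          intro x _
          rw [List.countP_cons]
          congr 1
          simp
        rw [Finset.sum_congr rfl hstep, Finset.sum_add_distrib]
        congr 1
        rw [Finset.sum_ite_eq Fs (p i) (fun _ => 1)]
        have hmemiff : p i ∈ Fs ↔ i ∈ T := by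
          rw [hFs, Finset.mem_erase]
          constructor
          · rintro ⟨hne, _⟩
            by_contra hiT
            have : i ∈ {s : B | p s = x₀} := by rw [hfiber]; exact hiT
            exact hne this
          · intro hiT
            refine ⟨?_, Finset.mem_image_of_mem p (Finset.mem_univ i)⟩
            intro hpe
            have : i ∈ Tᶜ := by rw [← hfiber]; exact hpe
            exact this hiT
        by_cases hiT : i ∈ T <;> simp [hmemiff, hiT]
    have hsub : A ⊆ cs.wordProd '' {l : List B | l.length ≤ N * (D + 1)} := by
      intro w hw
      obtain ⟨ω, hω, hweq⟩ := cs.exists_reduced_word' w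
      refine ⟨ω, ?_, hweq.symm⟩
      show ω.length ≤ N * (D + 1)
      have hbd := lenbound cs T hfin ω.length ω le_rfl hω
      have hcnt : ω.countP (fun i => decide (i ∈ T)) = D := by
        rw [hTcount ω, hD]
        apply Finset.sum_congr rfl
        intro x hx
        have hxne : x ≠ x₀ := (Finset.mem_erase.mp hx).1
        rw [← cfun_spec cs p hallow hω x, ← hweq]
        exact hw x hxne
      rw [hcnt] at hbd
      exact hbd
    exact Set.Finite.subset ((List.finite_length_le B (N * (D + 1))).image _) hsub
  · -- cardinality
    rw [← Nat.card_congr E, Nat.card_prod]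
end

section
/- Let (W,S) be a Coxeter system with Coxeter matrix m and let T ⊆ S be such that for every t ∈ T and s ∈ S∖T the exponent m_{st} is even or ∞. Then the Coxeter system (ker φ_T, S_T) is right-angled — that is, for all distinct τ_1, τ_2 ∈ S_T the order of τ_1τ_2 is 2 or ∞ — if and only if: (1) m_{st} ∈ {2,4,∞} for all s ∈ S∖T and t ∈ T, and (2) m_{tt'} ∈ {2,∞} for all distinct t,t' ∈ T. -/
noncomputable section
open Real

namespace KernelRA

variable {B : Type*} (M : CoxeterMatrix B)

/-- bilinear form coefficients -/
def kM (a b : B) : ℝ := - Real.cos (Real.pi / M a b)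

def LF (b : B) : (B →₀ ℝ) →ₗ[ℝ] ℝ := Finsupp.linearCombination ℝ (kM M b)

def rf (b : B) : Module.End ℝ (B →₀ ℝ) :=
  LinearMap.id - (2 : ℝ) • (LF M b).smulRight (Finsupp.single b 1)

lemma rf_apply (b : B) (v : B →₀ ℝ) :
    rf M b v = v - (2 * LF M b v) • Finsupp.single b 1 := by
  simp [rf, mul_smul, smul_smul]

lemma kM_diag (b : B) : kM M b b = 1 := by
  simp [kM, M.diagonal b, Real.cos_pi]

lemma LF_single (b c : B) : LF M b (Finsupp.single c 1) = kM M b c := by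
  simp [LF]

lemma LF_self (b : B) : LF M b (Finsupp.single b 1) = 1 := by
  rw [LF_single, kM_diag]

lemma rf_sq (b : B) : rf M b * rf M b = 1 := by
  apply LinearMap.ext
  intro v
  have h1 : LF M b (rf M b v) = - LF M b v := by
    rw [rf_apply, map_sub, map_smul, LF_self, smul_eq_mul]
    ring
  show rf M b (rf M b v) = v
  rw [rf_apply, h1, rf_apply]
  module

lemma rf_fixed {b : B} {v : B →₀ ℝ} (h : LF M b v = 0) : rf M b v = v := by
  rw [rf_apply, h]
  simp

end KernelRA

noncomputable section
open Real
namespace KernelRA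

variable {B : Type*} {M : CoxeterMatrix B}

lemma trig1 (g u : ℝ) : 2 * cos g * sin u - sin (u - g) = sin (u + g) := by
  rw [Real.sin_add, Real.sin_sub]; ring

lemma trig2 (g u : ℝ) :
    (4 * cos g ^ 2 - 1) * sin u - 2 * cos g * sin (u - g) = sin (u + 2 * g) := by
  have h1 : sin (u + 2 * g) = sin u * cos (2 * g) + cos u * sin (2 * g) := Real.sin_add u (2*g)
  rw [h1, Real.cos_two_mul, Real.sin_two_mul, Real.sin_sub]; ring

section pair
variable (a b : B)

local notation "γ" => Real.pi / (M a b : ℝ)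
local notation "sa" => Finsupp.single a (1:ℝ)
local notation "sb" => Finsupp.single b (1:ℝ)

lemma sin_pos' (hm : 2 ≤ M a b) : 0 < Real.sin γ := by
  apply Real.sin_pos_of_pos_of_lt_pi
  · apply div_pos Real.pi_pos
    exact_mod_cast Nat.lt_of_lt_of_le (by norm_num) hm
  · apply div_lt_self Real.pi_pos
    exact_mod_cast Nat.lt_of_lt_of_le (by norm_num) hm

lemma kM_ba : kM M b a = - Real.cos γ := by rw [kM, M.symmetric b a]

lemma LF_a_sb : LF M a sb = - Real.cos γ := by rw [LF_single]; rfl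
lemma LF_b_sa : LF M b sa = - Real.cos γ := by rw [LF_single, kM_ba]

lemma rfb_sa : rf M b sa = sa + (2 * Real.cos γ) • sb := by
  rw [rf_apply, LF_b_sa]; module

lemma rfa_sb : rf M a sb = sb + (2 * Real.cos γ) • sa := by
  rw [rf_apply, LF_a_sb]; module

lemma rfa_sa : rf M a sa = -sa := by
  rw [rf_apply, LF_self]; module

lemma rfb_sb : rf M b sb = -sb := by
  rw [rf_apply, LF_self]; module

lemma ev1 (hab : a ≠ b) :
    (rf M a * rf M b) sa =
      (4 * Real.cos γ ^ 2 - 1) • sa + (2 * Real.cos γ) • sb := by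
  rw [Module.End.mul_apply, rfb_sa, map_add, map_smul, rfa_sa, rfa_sb]
  module

lemma ev2 (hab : a ≠ b) :
    (rf M a * rf M b) sb =
      (-(2 * Real.cos γ)) • sa + (-1 : ℝ) • sb := by
  rw [Module.End.mul_apply, rfb_sb, map_neg, rfa_sb]
  module

lemma evo_a (hab : a ≠ b) (hm : 2 ≤ M a b) (k : ℕ) :
    ((rf M a * rf M b) ^ k) sa =
      (Real.sin ((2*(k:ℝ)+1) * γ) / Real.sin γ) • sa
      + (Real.sin (2*(k:ℝ) * γ) / Real.sin γ) • sb := by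
  induction k with
  | zero =>
      have hs := (sin_pos' a b hm).ne'
      rw [pow_zero]
      push_cast
      rw [show (2*(0:ℝ)+1) * γ = γ by ring, show 2*(0:ℝ) * γ = 0 by ring, Real.sin_zero,
        div_self hs, zero_div]
      simp
  | succ k ih =>
      rw [pow_succ', Module.End.mul_apply, ih, map_add, map_smul, map_smul,
        ev1 a b hab, ev2 a b hab]
      have hξ : Real.sin ((2*((k:ℝ)+1)+1) * γ) / Real.sin γ
          = (Real.sin ((2*(k:ℝ)+1) * γ) / Real.sin γ) * (4 * Real.cos γ ^ 2 - 1)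
            + (Real.sin (2*(k:ℝ) * γ) / Real.sin γ) * (-(2 * Real.cos γ)) := by
        have key := trig2 γ ((2*(k:ℝ)+1) * γ)
        rw [show (2*(k:ℝ)+1) * γ - γ = 2*(k:ℝ) * γ by ring,
          show (2*(k:ℝ)+1) * γ + 2 * γ = (2*((k:ℝ)+1)+1) * γ by ring] at key
        rw [← key]; ring
      have hη : Real.sin (2*((k:ℝ)+1) * γ) / Real.sin γ
          = (Real.sin ((2*(k:ℝ)+1) * γ) / Real.sin γ) * (2 * Real.cos γ)
            + (Real.sin (2*(k:ℝ) * γ) / Real.sin γ) * (-1) := by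
        have key := trig1 γ ((2*(k:ℝ)+1) * γ)
        rw [show (2*(k:ℝ)+1) * γ - γ = 2*(k:ℝ) * γ by ring,
          show (2*(k:ℝ)+1) * γ + γ = 2*((k:ℝ)+1) * γ by ring] at key
        rw [← key]; ring
      push_cast
      rw [hξ, hη]
      module

lemma evo_b (hab : a ≠ b) (hm : 2 ≤ M a b) (k : ℕ) :
    ((rf M a * rf M b) ^ k) sb =
      (-(Real.sin (2*(k:ℝ) * γ) / Real.sin γ)) • sa
      + (-(Real.sin ((2*(k:ℝ)-1) * γ) / Real.sin γ)) • sb := by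
  induction k with
  | zero =>
      have hs := (sin_pos' a b hm).ne'
      rw [pow_zero]
      push_cast
      rw [show 2*(0:ℝ) * γ = 0 by ring, show (2*(0:ℝ)-1) * γ = -γ by ring, Real.sin_zero,
        Real.sin_neg, zero_div, neg_div, neg_neg, div_self hs]
      simp
  | succ k ih =>
      rw [pow_succ', Module.End.mul_apply, ih, map_add, map_smul, map_smul,
        ev1 a b hab, ev2 a b hab]
      have hξ : -(Real.sin (2*((k:ℝ)+1) * γ) / Real.sin γ)
          = (-(Real.sin (2*(k:ℝ) * γ) / Real.sin γ)) * (4 * Real.cos γ ^ 2 - 1)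
            + (-(Real.sin ((2*(k:ℝ)-1) * γ) / Real.sin γ)) * (-(2 * Real.cos γ)) := by
        have key := trig2 γ (2*(k:ℝ) * γ)
        rw [show 2*(k:ℝ) * γ - γ = (2*(k:ℝ)-1) * γ by ring,
          show 2*(k:ℝ) * γ + 2 * γ = 2*((k:ℝ)+1) * γ by ring] at key
        rw [← key]; ring
      have hη : -(Real.sin ((2*((k:ℝ)+1)-1) * γ) / Real.sin γ)
          = (-(Real.sin (2*(k:ℝ) * γ) / Real.sin γ)) * (2 * Real.cos γ)
            + (-(Real.sin ((2*(k:ℝ)-1) * γ) / Real.sin γ)) * (-1) := by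
        have key := trig1 γ (2*(k:ℝ) * γ)
        rw [show 2*(k:ℝ) * γ - γ = (2*(k:ℝ)-1) * γ by ring,
          show 2*(k:ℝ) * γ + γ = (2*((k:ℝ)+1)-1) * γ by ring] at key
        rw [← key]; ring
      push_cast
      rw [hξ, hη]
      module

end pair
end KernelRA
end

noncomputable section
open Real
namespace KernelRA

variable {B : Type*} {M : CoxeterMatrix B}

section pair2
variable (a b : B)

local notation "γ" => Real.pi / (M a b : ℝ)
local notation "sa" => Finsupp.single a (1:ℝ)
local notation "sb" => Finsupp.single b (1:ℝ)

lemma pow_fix {f : Module.End ℝ (B →₀ ℝ)} {v : B →₀ ℝ} (h : f v = v) (k : ℕ) :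
    (f ^ k) v = v := by
  induction k with
  | zero => rw [pow_zero]; rfl
  | succ k ih => rw [pow_succ', Module.End.mul_apply, ih, h]

lemma rel_pow (hab : a ≠ b) (hm : 2 ≤ M a b) : (rf M a * rf M b) ^ (M a b) = 1 := by
  have hmR : ((M a b : ℝ)) ≠ 0 := by
    exact_mod_cast (Nat.lt_of_lt_of_le (by norm_num) hm).ne'
  have hs := sin_pos' a b hm
  have hs2 : Real.sin γ ^ 2 = 1 - Real.cos γ ^ 2 := by
    have := Real.sin_sq_add_cos_sq γ; linarith
  apply LinearMap.ext
  intro v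
  set x := LF M a v with hx
  set y := LF M b v with hy
  set lam := (x + Real.cos γ * y) / Real.sin γ ^ 2 with hlam
  set mu := (Real.cos γ * x + y) / Real.sin γ ^ 2 with hmu
  set v' := v - lam • sa - mu • sb with hv'
  have hLa : LF M a v' = 0 := by
    rw [hv', map_sub, map_sub, map_smul, map_smul, LF_self, LF_a_sb, ← hx, smul_eq_mul,
      smul_eq_mul, hlam, hmu]
    field_simp
    linear_combination x * hs2
  have hLb : LF M b v' = 0 := by
    rw [hv', map_sub, map_sub, map_smul, map_smul, LF_b_sa, LF_self, ← hy, smul_eq_mul,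
      smul_eq_mul, hlam, hmu]
    field_simp
    linear_combination y * hs2
  have hfix : (rf M a * rf M b) v' = v' := by
    rw [Module.End.mul_apply, rf_fixed M hLb, rf_fixed M hLa]
  have hva : ((rf M a * rf M b) ^ (M a b)) sa = sa := by
    rw [evo_a a b hab hm]
    have h1 : (2*((M a b : ℕ):ℝ)+1) * γ = γ + 2 * Real.pi := by field_simp; ring
    have h2 : 2*((M a b : ℕ):ℝ) * γ = 2 * Real.pi := by field_simp
    rw [h1, h2, Real.sin_add_two_pi, Real.sin_two_pi, div_self hs.ne', zero_div]
    module
  have hvb : ((rf M a * rf M b) ^ (M a b)) sb = sb := by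
    rw [evo_b a b hab hm]
    have h1 : (2*((M a b : ℕ):ℝ)-1) * γ = 2 * Real.pi - γ := by field_simp
    have h2 : 2*((M a b : ℕ):ℝ) * γ = 2 * Real.pi := by field_simp
    rw [h1, h2, Real.sin_two_pi, Real.sin_two_pi_sub, zero_div, neg_div, neg_neg,
      div_self hs.ne']
    module
  have hdecomp : v = v' + lam • sa + mu • sb := by rw [hv']; module
  show ((rf M a * rf M b) ^ (M a b)) v = v
  rw [hdecomp, map_add, map_add, map_smul, map_smul, hva, hvb, pow_fix hfix]

end pair2

def sgrUnit (b : B) : (Module.End ℝ (B →₀ ℝ))ˣ :=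
  ⟨rf M b, rf M b, rf_sq M b, rf_sq M b⟩

lemma sgr_liftable : M.IsLiftable (sgrUnit (M := M)) := by
  intro i j
  rcases eq_or_ne (M i j) 0 with h0 | h0
  · rw [h0, pow_zero]
  rcases eq_or_ne i j with rfl | hij
  · rw [M.diagonal i, pow_one]
    exact Units.ext (rf_sq M i)
  · have hm : 2 ≤ M i j := by
      rcases Nat.lt_or_ge (M i j) 2 with h | h
      · interval_cases h' : (M i j) <;> simp_all
        exact absurd h' (M.off_diagonal i j hij)
      · exact h
    apply Units.ext
    rw [Units.val_pow_eq_pow_val, Units.val_mul]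
    exact rel_pow i j hij hm

variable {W : Type*} [Group W]

theorem simple_mul_pow_ne_one (cs : CoxeterSystem M W) {a b : B} {k : ℕ}
    (h0 : 0 < k) (hk : k < M a b) : (cs.simple a * cs.simple b) ^ k ≠ 1 := by
  have hab : a ≠ b := by
    rintro rfl
    rw [M.diagonal a] at hk
    omega
  have hm : 2 ≤ M a b := by
    have := M.off_diagonal a b hab
    omega
  have hs := sin_pos' (M := M) a b hm
  intro hcon
  have hρ := congrArg (cs.lift ⟨sgrUnit, sgr_liftable⟩) hcon
  rw [map_pow, map_mul, CoxeterSystem.lift_apply_simple, CoxeterSystem.lift_apply_simple,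
    map_one] at hρ
  have hval : ((rf M a * rf M b) ^ k) = 1 := by
    have := congrArg (Units.val) hρ
    rwa [Units.val_pow_eq_pow_val, Units.val_mul, Units.val_one] at this
  have happ := DFunLike.congr_fun hval (Finsupp.single a (1:ℝ))
  rw [evo_a a b hab hm] at happ
  simp only [Module.End.one_apply] at happ
  have hb := DFunLike.congr_fun happ b
  have ha := DFunLike.congr_fun happ a
  simp only [Finsupp.add_apply, Finsupp.smul_apply, Finsupp.single_eq_same,
    Finsupp.single_eq_of_ne hab, Finsupp.single_eq_of_ne (Ne.symm hab), smul_eq_mul,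
    mul_zero, mul_one, add_zero, zero_add, smul_zero, smul_eq_mul] at ha hb
  have hsin : Real.sin (2*(k:ℝ) * (Real.pi / (M a b : ℝ))) = 0 := by
    rcases div_eq_zero_iff.mp hb with h | h
    · exact h
    · exact absurd h hs.ne'
  rw [Real.sin_eq_zero_iff] at hsin
  obtain ⟨n, hn⟩ := hsin
  have hmR : ((M a b : ℝ)) ≠ 0 := by
    exact_mod_cast (Nat.lt_of_lt_of_le (by norm_num) hm).ne'
  have hnm : (n : ℝ) * (M a b : ℝ) = 2 * k := by
    have h1 : ((n:ℝ) * (M a b : ℝ)) * Real.pi = (2*(k:ℝ)) * Real.pi := by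
      calc ((n:ℝ) * (M a b : ℝ)) * Real.pi = ((n:ℝ) * Real.pi) * (M a b : ℝ) := by ring
        _ = (2*(k:ℝ) * (Real.pi / (M a b : ℝ))) * (M a b : ℝ) := by rw [hn]
        _ = (2*(k:ℝ)) * Real.pi := by field_simp
    exact mul_right_cancel₀ Real.pi_ne_zero h1
  have hnm' : n * (M a b : ℤ) = 2 * k := by exact_mod_cast hnm
  have hn1 : n = 1 := by
    have h1 : (0:ℤ) < M a b := by exact_mod_cast Nat.lt_of_lt_of_le (by norm_num) hm
    have h2 : (0:ℤ) < 2 * k := by positivity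
    have h3n : 2 * k < 2 * M a b := by omega
    have h3 : (2:ℤ) * k < 2 * (M a b : ℤ) := by exact_mod_cast h3n
    nlinarith
  have hm2k : (M a b : ℤ) = 2 * k := by rw [hn1, one_mul] at hnm'; exact hnm' 
  have hγ : (2*(k:ℝ)+1) * (Real.pi / (M a b : ℝ)) = Real.pi + Real.pi / (M a b : ℝ) := by
    have : ((M a b : ℕ) : ℝ) = 2 * k := by exact_mod_cast hm2k
    rw [this]
    have : (k:ℝ) ≠ 0 := by exact_mod_cast h0.ne'
    field_simp
  rw [hγ, Real.sin_add, Real.sin_pi, Real.cos_pi] at ha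
  have hsne := hs.ne'
  field_simp at ha
  linarith

end KernelRA
end


noncomputable section
open Classical

namespace KernelRA2

def Mc {B : Type*} (M : CoxeterMatrix B) (T : Set B) : CoxeterMatrix {b : B // b ∉ T} where
  M := fun i j => M i.1 j.1
  isSymm := by
    show Matrix.transpose _ = _
    funext i j
    exact M.symmetric j.1 i.1
  diagonal := fun i => M.diagonal i.1
  off_diagonal := fun i j h => M.off_diagonal i.1 j.1 (fun e => h (Subtype.ext e))

variable {B : Type*} {W : Type*} [Group W] (M : CoxeterMatrix B) (T : Set B)

abbrev Wc := (Mc M T).Group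

abbrev csc : CoxeterSystem (Mc M T) (Wc M T) := (Mc M T).toCoxeterSystem

abbrev sc (u : {b : B // b ∉ T}) : Wc M T := (csc M T).simple u

variable (cs : CoxeterSystem M W)

def iota : Wc M T →* W :=
  (csc M T).lift ⟨fun u => cs.simple u.1, fun i j => cs.simple_mul_simple_pow i.1 j.1⟩

lemma iota_simple (u : {b : B // b ∉ T}) :
    iota M T cs (sc M T u) = cs.simple u.1 :=
  CoxeterSystem.lift_apply_simple _ _ u

/-- generator index for the kernel group -/
abbrev X := ({t : B // t ∈ T}) × (Wc M T)

def rels : Set (FreeGroup (X M T)) :=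
  {r | (∃ t w u, r = (FreeGroup.of (t,w) * FreeGroup.of (t, w * sc M T u)) ^
          (M u.1 t.1 / 2)) ∨
       (∃ t t' w, r = (FreeGroup.of (t,w) * FreeGroup.of (t',w)) ^ (M t.1 t'.1))}

abbrev A := PresentedGroup (rels M T)

abbrev Aof (x : X M T) : A M T := PresentedGroup.of x

lemma A_rel2 (t : {t : B // t ∈ T}) (w : Wc M T) (u : {b : B // b ∉ T}) :
    (Aof M T (t,w) * Aof M T (t, w * sc M T u)) ^ (M u.1 t.1 / 2) = 1 := by
  have h : ((FreeGroup.of (t,w) * FreeGroup.of (t, w * sc M T u)) ^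
      (M u.1 t.1 / 2)) ∈ rels M T := Or.inl ⟨t, w, u, rfl⟩
  have h2 : PresentedGroup.mk (rels M T)
      ((FreeGroup.of (t,w) * FreeGroup.of (t, w * sc M T u)) ^ (M u.1 t.1 / 2)) = 1 :=
    (QuotientGroup.eq_one_iff _).mpr (Subgroup.subset_normalClosure h)
  rw [map_pow, map_mul] at h2
  exact h2

lemma A_rel3 (t t' : {t : B // t ∈ T}) (w : Wc M T) :
    (Aof M T (t,w) * Aof M T (t',w)) ^ (M t.1 t'.1) = 1 := by
  have h : ((FreeGroup.of (t,w) * FreeGroup.of (t',w)) ^ (M t.1 t'.1)) ∈ rels M T :=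
    Or.inr ⟨t, t', w, rfl⟩
  have h2 : PresentedGroup.mk (rels M T)
      ((FreeGroup.of (t,w) * FreeGroup.of (t',w)) ^ (M t.1 t'.1)) = 1 :=
    (QuotientGroup.eq_one_iff _).mpr (Subgroup.subset_normalClosure h)
  rw [map_pow, map_mul] at h2
  exact h2

lemma A_sq (t : {t : B // t ∈ T}) (w : Wc M T) : Aof M T (t,w) * Aof M T (t,w) = 1 := by
  have := A_rel3 M T t t w
  rwa [M.diagonal t.1, pow_one] at this

end KernelRA2

noncomputable section
namespace KernelRA2
open SemidirectProduct

variable {B : Type*} {W : Type*} [Group W] (M : CoxeterMatrix B) (T : Set B)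

lemma act_aux (g : Wc M T) :
    ∀ r ∈ rels M T, (FreeGroup.lift (fun x : X M T => Aof M T (x.1, g * x.2))) r = 1 := by
  rintro r (⟨t, w, u, rfl⟩ | ⟨t, t', w, rfl⟩)
  · rw [map_pow, map_mul, FreeGroup.lift_apply_of, FreeGroup.lift_apply_of]
    have : g * (w * sc M T u) = (g * w) * sc M T u := (mul_assoc g w _).symm
    rw [this]
    exact A_rel2 M T t (g*w) u
  · rw [map_pow, map_mul, FreeGroup.lift_apply_of, FreeGroup.lift_apply_of]
    exact A_rel3 M T t t' (g*w)

def actHom (g : Wc M T) : A M T →* A M T := PresentedGroup.toGroup (act_aux M T g)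

lemma actHom_of (g : Wc M T) (x : X M T) :
    actHom M T g (Aof M T x) = Aof M T (x.1, g * x.2) :=
  PresentedGroup.toGroup.of _

lemma actHom_comp (g h : Wc M T) (a : A M T) :
    actHom M T g (actHom M T h a) = actHom M T (g * h) a := by
  have hc : (actHom M T g).comp (actHom M T h) = actHom M T (g*h) := by
    apply PresentedGroup.ext
    intro x
    show actHom M T g (actHom M T h (Aof M T x)) = actHom M T (g*h) (Aof M T x)
    rw [actHom_of, actHom_of, actHom_of, mul_assoc]
  exact DFunLike.congr_fun hc a

lemma actHom_id (a : A M T) : actHom M T 1 a = a := by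
  have h1 : actHom M T 1 = MonoidHom.id (A M T) := by
    apply PresentedGroup.ext
    intro x
    show actHom M T 1 (Aof M T x) = Aof M T x
    rw [actHom_of, one_mul]
  rw [h1]; rfl

def act : Wc M T →* MulAut (A M T) :=
  MonoidHom.mk' (fun g =>
    { toFun := actHom M T g
      invFun := actHom M T g⁻¹
      left_inv := fun a => by rw [actHom_comp, inv_mul_cancel, actHom_id]
      right_inv := fun a => by rw [actHom_comp, mul_inv_cancel, actHom_id]
      map_mul' := map_mul _ })
    (fun g h => by
      ext a
      exact (actHom_comp M T g h a).symm)

lemma act_of (g : Wc M T) (x : X M T) : act M T g (Aof M T x) = Aof M T (x.1, g * x.2) :=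
  actHom_of M T g x

abbrev GK := (A M T) ⋊[act M T] (Wc M T)

lemma inr_mul_inl (g : Wc M T) (n : A M T) :
    (inr g : GK M T) * inl n = inl (act M T g n) * inr g := by
  rw [inl_aut, mul_assoc, mul_assoc, ← map_mul, inv_mul_cancel, map_one, mul_one]

def thetaF (b : B) : GK M T :=
  if h : b ∈ T then inl (Aof M T (⟨b,h⟩, 1)) else inr (sc M T ⟨b,h⟩)

lemma theta_liftable (heven : ∀ t ∈ T, ∀ s ∉ T, Even (M t s)) :
    M.IsLiftable (thetaF M T) := by
  intro i j
  unfold thetaF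
  by_cases hi : i ∈ T <;> by_cases hj : j ∈ T
  · rw [dif_pos hi, dif_pos hj, ← map_mul, ← map_pow, A_rel3 M T ⟨i,hi⟩ ⟨j,hj⟩ 1, map_one]
  · -- i ∈ T, j ∉ T
    rw [dif_pos hi, dif_neg hj]
    obtain ⟨k, hk⟩ := heven i hi j hj
    have hgg : sc M T ⟨j,hj⟩ * sc M T ⟨j,hj⟩ = 1 :=
      (csc M T).simple_mul_simple_self ⟨j,hj⟩
    have h1 : (inl (Aof M T (⟨i,hi⟩,1)) * inr (sc M T ⟨j,hj⟩) : GK M T) ^ 2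
        = inl (Aof M T (⟨i,hi⟩,1) * Aof M T (⟨i,hi⟩, sc M T ⟨j,hj⟩)) := by
      calc (inl (Aof M T (⟨i,hi⟩,1)) * inr (sc M T ⟨j,hj⟩) : GK M T) ^ 2
          = inl (Aof M T (⟨i,hi⟩,1)) * (inr (sc M T ⟨j,hj⟩) * inl (Aof M T (⟨i,hi⟩,1)))
            * inr (sc M T ⟨j,hj⟩) := by rw [sq]; group
        _ = inl (Aof M T (⟨i,hi⟩,1)) * (inl (act M T (sc M T ⟨j,hj⟩) (Aof M T (⟨i,hi⟩,1)))
            * inr (sc M T ⟨j,hj⟩)) * inr (sc M T ⟨j,hj⟩) := by rw [inr_mul_inl]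
        _ = (inl (Aof M T (⟨i,hi⟩,1)) * inl (act M T (sc M T ⟨j,hj⟩) (Aof M T (⟨i,hi⟩,1))))
            * (inr (sc M T ⟨j,hj⟩) * inr (sc M T ⟨j,hj⟩)) := by group
        _ = inl (Aof M T (⟨i,hi⟩,1) * act M T (sc M T ⟨j,hj⟩) (Aof M T (⟨i,hi⟩,1)))
            * inr (sc M T ⟨j,hj⟩ * sc M T ⟨j,hj⟩) := by
              rw [← map_mul, ← map_mul]
        _ = inl (Aof M T (⟨i,hi⟩,1) * Aof M T (⟨i,hi⟩, sc M T ⟨j,hj⟩)) := by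
              rw [act_of]
              simp only [mul_one]
              rw [hgg, map_one, mul_one]
    have hm : M i j = 2 * (M i j / 2) := by omega
    rw [hm, pow_mul, h1, ← map_pow]
    have hrel := A_rel2 M T ⟨i,hi⟩ 1 ⟨j,hj⟩
    rw [one_mul] at hrel
    have h2 : M i j / 2 = M (⟨j,hj⟩ : {b : B // b ∉ T}).1 (⟨i,hi⟩ : {t : B // t ∈ T}).1 / 2 := by
      rw [M.symmetric i j]
    rw [h2, hrel, map_one]
  · -- i ∉ T, j ∈ T
    rw [dif_neg hi, dif_pos hj]
    have hev : Even (M i j) := by rw [M.symmetric i j]; exact heven j hj i hi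
    obtain ⟨k, hk⟩ := hev
    have hgg : sc M T ⟨i,hi⟩ * sc M T ⟨i,hi⟩ = 1 :=
      (csc M T).simple_mul_simple_self ⟨i,hi⟩
    have h1 : (inr (sc M T ⟨i,hi⟩) * inl (Aof M T (⟨j,hj⟩,1)) : GK M T) ^ 2
        = inl (Aof M T (⟨j,hj⟩, sc M T ⟨i,hi⟩)
            * Aof M T (⟨j,hj⟩, sc M T ⟨i,hi⟩ * sc M T ⟨i,hi⟩)) := by
      calc (inr (sc M T ⟨i,hi⟩) * inl (Aof M T (⟨j,hj⟩,1)) : GK M T) ^ 2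
          = (inr (sc M T ⟨i,hi⟩) * inl (Aof M T (⟨j,hj⟩,1)))
            * (inr (sc M T ⟨i,hi⟩) * inl (Aof M T (⟨j,hj⟩,1))) := by rw [sq]
        _ = (inl (act M T (sc M T ⟨i,hi⟩) (Aof M T (⟨j,hj⟩,1))) * inr (sc M T ⟨i,hi⟩))
            * (inl (act M T (sc M T ⟨i,hi⟩) (Aof M T (⟨j,hj⟩,1))) * inr (sc M T ⟨i,hi⟩)) := by
              rw [inr_mul_inl]
        _ = inl (act M T (sc M T ⟨i,hi⟩) (Aof M T (⟨j,hj⟩,1)))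
            * (inr (sc M T ⟨i,hi⟩) * inl (act M T (sc M T ⟨i,hi⟩) (Aof M T (⟨j,hj⟩,1))))
            * inr (sc M T ⟨i,hi⟩) := by group
        _ = inl (act M T (sc M T ⟨i,hi⟩) (Aof M T (⟨j,hj⟩,1)))
            * (inl (act M T (sc M T ⟨i,hi⟩) (act M T (sc M T ⟨i,hi⟩) (Aof M T (⟨j,hj⟩,1))))
              * inr (sc M T ⟨i,hi⟩)) * inr (sc M T ⟨i,hi⟩) := by rw [inr_mul_inl]
        _ = (inl (act M T (sc M T ⟨i,hi⟩) (Aof M T (⟨j,hj⟩,1)))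
            * inl (act M T (sc M T ⟨i,hi⟩) (act M T (sc M T ⟨i,hi⟩) (Aof M T (⟨j,hj⟩,1)))))
            * (inr (sc M T ⟨i,hi⟩) * inr (sc M T ⟨i,hi⟩)) := by group
        _ = inl (act M T (sc M T ⟨i,hi⟩) (Aof M T (⟨j,hj⟩,1))
            * act M T (sc M T ⟨i,hi⟩) (act M T (sc M T ⟨i,hi⟩) (Aof M T (⟨j,hj⟩,1))))
            * inr (sc M T ⟨i,hi⟩ * sc M T ⟨i,hi⟩) := by simp only [← map_mul]
        _ = inl (Aof M T (⟨j,hj⟩, sc M T ⟨i,hi⟩)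
            * Aof M T (⟨j,hj⟩, sc M T ⟨i,hi⟩ * sc M T ⟨i,hi⟩)) := by
              rw [act_of, act_of]
              simp only [mul_one]
              rw [hgg, map_one, mul_one]
    have hm : M i j = 2 * (M i j / 2) := by omega
    rw [hm, pow_mul, h1, ← map_pow]
    rw [A_rel2 M T ⟨j,hj⟩ (sc M T ⟨i,hi⟩) ⟨i,hi⟩, map_one]
  · rw [dif_neg hi, dif_neg hj, ← map_mul, ← map_pow]
    have h1 : ((sc M T ⟨i,hi⟩) * (sc M T ⟨j,hj⟩)) ^ (M i j) = 1 :=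
      (csc M T).simple_mul_simple_pow ⟨i,hi⟩ ⟨j,hj⟩
    rw [h1, map_one]

variable (cs : CoxeterSystem M W)

def theta (heven : ∀ t ∈ T, ∀ s ∉ T, Even (M t s)) : W →* GK M T :=
  cs.lift ⟨thetaF M T, theta_liftable M T heven⟩

lemma theta_simple_T (heven : ∀ t ∈ T, ∀ s ∉ T, Even (M t s)) {t : B} (ht : t ∈ T) :
    theta M T cs heven (cs.simple t) = inl (Aof M T (⟨t,ht⟩, 1)) := by
  rw [theta, CoxeterSystem.lift_apply_simple, thetaF, dif_pos ht]

lemma theta_iota (heven : ∀ t ∈ T, ∀ s ∉ T, Even (M t s)) (v : Wc M T) :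
    theta M T cs heven (iota M T cs v) = inr v := by
  have hc : (theta M T cs heven).comp (iota M T cs) = inr := by
    apply (csc M T).ext_simple
    intro u
    show theta M T cs heven (iota M T cs (sc M T u)) = inr (sc M T u)
    rw [iota_simple, theta, CoxeterSystem.lift_apply_simple, thetaF, dif_neg u.2]
  exact DFunLike.congr_fun hc v

end KernelRA2

noncomputable section
namespace KernelRA2
open SemidirectProduct DihedralGroup

variable {B : Type*} {W : Type*} [Group W] (M : CoxeterMatrix B) (T : Set B)
  (cs : CoxeterSystem M W)

def HH (t : {t : B // t ∈ T}) : Subgroup (Wc M T) :=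
  Subgroup.closure {x | ∃ u : {b : B // b ∉ T}, M u.1 t.1 = 2 ∧ x = sc M T u}

lemma simple_comm {i j : B} (h2 : M i j = 2) :
    Commute (cs.simple i) (cs.simple j) := by
  have h := cs.simple_mul_simple_pow i j
  rw [h2, sq] at h
  have h3 : cs.simple i * cs.simple j = (cs.simple i * cs.simple j)⁻¹ :=
    eq_inv_of_mul_eq_one_left h
  rw [mul_inv_rev, cs.inv_simple, cs.inv_simple] at h3
  exact h3

lemma iotaH_comm (t : {t : B // t ∈ T}) {g : Wc M T} (hg : g ∈ HH M T t) :
    Commute (iota M T cs g) (cs.simple t.1) := by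
  induction hg using Subgroup.closure_induction with
  | mem x hx =>
      obtain ⟨u, hu2, rfl⟩ := hx
      rw [iota_simple]
      exact simple_comm M cs hu2
  | one => rw [map_one]; exact Commute.one_left _
  | mul x y hx hy ihx ihy => rw [map_mul]; exact ihx.mul_left ihy
  | inv x hx ih => rw [map_inv]; exact ih.inv_left

/-- conjugation of a commuting element -/
lemma conj_comm_eq {a s : W} (h : Commute a s) : a * s * a⁻¹ = s := by
  rw [h.eq, mul_assoc, mul_inv_cancel, mul_one]

lemma case2_sq (t₁ t₂ : {t : B // t ∈ T}) (hM : M t₁.1 t₂.1 = 2)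
    {a b : Wc M T} (ha : a ∈ HH M T t₁) (hb : b ∈ HH M T t₂) :
    (cs.simple t₁.1 * (iota M T cs (a * b) * cs.simple t₂.1 * (iota M T cs (a * b))⁻¹)) ^ 2
      = 1 := by
  have hca := iotaH_comm M T cs t₁ ha
  have hcb := iotaH_comm M T cs t₂ hb
  have hy : iota M T cs (a * b) * cs.simple t₂.1 * (iota M T cs (a * b))⁻¹
      = iota M T cs a * cs.simple t₂.1 * (iota M T cs a)⁻¹ := by
    rw [map_mul, mul_inv_rev]
    have : iota M T cs b * cs.simple t₂.1 * (iota M T cs b)⁻¹ = cs.simple t₂.1 :=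
      conj_comm_eq hcb
    calc iota M T cs a * iota M T cs b * cs.simple t₂.1 *
          ((iota M T cs b)⁻¹ * (iota M T cs a)⁻¹)
        = iota M T cs a * (iota M T cs b * cs.simple t₂.1 * (iota M T cs b)⁻¹) *
          (iota M T cs a)⁻¹ := by group
      _ = iota M T cs a * cs.simple t₂.1 * (iota M T cs a)⁻¹ := by rw [this]
  rw [hy]
  have hx : cs.simple t₁.1 * (iota M T cs a * cs.simple t₂.1 * (iota M T cs a)⁻¹)
      = iota M T cs a * (cs.simple t₁.1 * cs.simple t₂.1) * (iota M T cs a)⁻¹ := by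
    calc cs.simple t₁.1 * (iota M T cs a * cs.simple t₂.1 * (iota M T cs a)⁻¹)
        = (cs.simple t₁.1 * iota M T cs a) * cs.simple t₂.1 * (iota M T cs a)⁻¹ := by group
      _ = (iota M T cs a * cs.simple t₁.1) * cs.simple t₂.1 * (iota M T cs a)⁻¹ := by
          rw [hca.eq]
      _ = iota M T cs a * (cs.simple t₁.1 * cs.simple t₂.1) * (iota M T cs a)⁻¹ := by group
  rw [hx]
  have hrel : (cs.simple t₁.1 * cs.simple t₂.1) ^ 2 = 1 := by
    have := cs.simple_mul_simple_pow t₁.1 t₂.1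
    rwa [hM] at this
  calc (iota M T cs a * (cs.simple t₁.1 * cs.simple t₂.1) * (iota M T cs a)⁻¹) ^ 2
      = iota M T cs a * (cs.simple t₁.1 * cs.simple t₂.1) ^ 2 * (iota M T cs a)⁻¹ := by
        rw [sq, sq]; group
    _ = 1 := by rw [hrel, mul_one, mul_inv_cancel]

lemma case3_sq (t : {t : B // t ∈ T}) (u : {b : B // b ∉ T}) (hM : M u.1 t.1 = 4)
    {a b : Wc M T} (ha : a ∈ HH M T t) (hb : b ∈ HH M T t) :
    (cs.simple t.1 * (iota M T cs (a * sc M T u * b) * cs.simple t.1 *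
      (iota M T cs (a * sc M T u * b))⁻¹)) ^ 2 = 1 := by
  have hca := iotaH_comm M T cs t ha
  have hcb := iotaH_comm M T cs t hb
  have hiu : iota M T cs (sc M T u) = cs.simple u.1 := iota_simple M T cs u
  have hy : iota M T cs (a * sc M T u * b) * cs.simple t.1 *
        (iota M T cs (a * sc M T u * b))⁻¹
      = iota M T cs a * (cs.simple u.1 * cs.simple t.1 * (cs.simple u.1)⁻¹) *
        (iota M T cs a)⁻¹ := by
    rw [map_mul, map_mul, hiu, mul_inv_rev, mul_inv_rev]
    calc iota M T cs a * cs.simple u.1 * iota M T cs b * cs.simple t.1 *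
          ((iota M T cs b)⁻¹ * ((cs.simple u.1)⁻¹ * (iota M T cs a)⁻¹))
        = iota M T cs a * cs.simple u.1 * (iota M T cs b * cs.simple t.1 *
            (iota M T cs b)⁻¹) * ((cs.simple u.1)⁻¹ * (iota M T cs a)⁻¹) := by group
      _ = iota M T cs a * cs.simple u.1 * cs.simple t.1 *
            ((cs.simple u.1)⁻¹ * (iota M T cs a)⁻¹) := by rw [conj_comm_eq hcb]
      _ = iota M T cs a * (cs.simple u.1 * cs.simple t.1 * (cs.simple u.1)⁻¹) *
            (iota M T cs a)⁻¹ := by group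
  rw [hy]
  have hx : cs.simple t.1 * (iota M T cs a * (cs.simple u.1 * cs.simple t.1 *
        (cs.simple u.1)⁻¹) * (iota M T cs a)⁻¹)
      = iota M T cs a * (cs.simple t.1 * cs.simple u.1 * cs.simple t.1 *
        (cs.simple u.1)⁻¹) * (iota M T cs a)⁻¹ := by
    calc cs.simple t.1 * (iota M T cs a * (cs.simple u.1 * cs.simple t.1 *
          (cs.simple u.1)⁻¹) * (iota M T cs a)⁻¹)
        = (cs.simple t.1 * iota M T cs a) * (cs.simple u.1 * cs.simple t.1 *
          (cs.simple u.1)⁻¹) * (iota M T cs a)⁻¹ := by group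
      _ = (iota M T cs a * cs.simple t.1) * (cs.simple u.1 * cs.simple t.1 *
          (cs.simple u.1)⁻¹) * (iota M T cs a)⁻¹ := by rw [hca.eq]
      _ = iota M T cs a * (cs.simple t.1 * cs.simple u.1 * cs.simple t.1 *
          (cs.simple u.1)⁻¹) * (iota M T cs a)⁻¹ := by group
  rw [hx]
  have hrel : (cs.simple t.1 * cs.simple u.1) ^ 4 = 1 := by
    have := cs.simple_mul_simple_pow t.1 u.1
    rwa [M.symmetric t.1 u.1, hM] at this
  have hmid : (cs.simple t.1 * cs.simple u.1 * cs.simple t.1 * (cs.simple u.1)⁻¹) ^ 2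
      = (cs.simple t.1 * cs.simple u.1) ^ 4 := by
    have h0 : cs.simple t.1 * cs.simple u.1 * cs.simple t.1 * cs.simple u.1
        = (cs.simple t.1 * cs.simple u.1) ^ 2 := by rw [sq]; group
    rw [cs.inv_simple, h0, ← pow_mul]
  calc (iota M T cs a * (cs.simple t.1 * cs.simple u.1 * cs.simple t.1 *
        (cs.simple u.1)⁻¹) * (iota M T cs a)⁻¹) ^ 2
      = iota M T cs a * (cs.simple t.1 * cs.simple u.1 * cs.simple t.1 *
        (cs.simple u.1)⁻¹) ^ 2 * (iota M T cs a)⁻¹ := by rw [sq, sq]; group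
    _ = 1 := by rw [hmid, hrel, mul_one, mul_inv_cancel]

end KernelRA2

noncomputable section
namespace KernelRA2
open SemidirectProduct DihedralGroup Classical

variable {B : Type*} {W : Type*} [Group W] (M : CoxeterMatrix B) (T : Set B)

def FD (t₁ t₂ : {t : B // t ∈ T}) (v : Wc M T) (x : X M T) : DihedralGroup 0 :=
  if x.1 = t₁ ∧ x.2 ∈ HH M T t₁ then sr 0
  else if x.1 = t₂ ∧ v⁻¹ * x.2 ∈ HH M T t₂ then sr 1
  else 1

lemma FD_cases (t₁ t₂ : {t : B // t ∈ T}) (v : Wc M T) (x : X M T) :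
    FD M T t₁ t₂ v x = 1 ∨ FD M T t₁ t₂ v x = sr 0 ∨ FD M T t₁ t₂ v x = sr 1 := by
  unfold FD; split_ifs <;> tauto

lemma FD_invol (t₁ t₂ : {t : B // t ∈ T}) (v : Wc M T) (x : X M T) :
    FD M T t₁ t₂ v x * FD M T t₁ t₂ v x = 1 := by
  rcases FD_cases M T t₁ t₂ v x with h | h | h <;>
    simp [h, sr_mul_sr]

lemma sr_ne_sr' : (sr 0 : DihedralGroup 0) ≠ sr 1 := by
  intro h
  have : ((0 : ZMod 0)) = 1 := by injection h
  exact absurd this (by decide)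

lemma one_ne_sr (i : ZMod 0) : (1 : DihedralGroup 0) ≠ sr i := by
  rw [DihedralGroup.one_def]
  intro h
  injection h

lemma FD_eq_sr0_iff (t₁ t₂ : {t : B // t ∈ T}) (v : Wc M T) (x : X M T) :
    FD M T t₁ t₂ v x = sr 0 ↔ (x.1 = t₁ ∧ x.2 ∈ HH M T t₁) := by
  unfold FD
  split_ifs with h h2
  · simp [h]
  · constructor
    · intro he; exact absurd he.symm sr_ne_sr'
    · intro hc; exact absurd hc h
  · constructor
    · intro he; exact absurd he (one_ne_sr 0)
    · intro hc; exact absurd hc h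

lemma FD_eq_sr1_iff (t₁ t₂ : {t : B // t ∈ T}) (v : Wc M T) (x : X M T) :
    FD M T t₁ t₂ v x = sr 1 ↔
      (¬(x.1 = t₁ ∧ x.2 ∈ HH M T t₁) ∧ (x.1 = t₂ ∧ v⁻¹ * x.2 ∈ HH M T t₂)) := by
  unfold FD
  split_ifs with h h2
  · constructor
    · intro he; exact absurd he.symm (Ne.symm sr_ne_sr')
    · intro hc; exact absurd h hc.1
  · tauto
  · constructor
    · intro he; exact absurd he (one_ne_sr 1)
    · tauto

lemma d_sq (X Y : DihedralGroup 0)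
    (hX : X = 1 ∨ X = sr 0 ∨ X = sr 1) (hY : Y = 1 ∨ Y = sr 0 ∨ Y = sr 1)
    (hbad1 : ¬(X = sr 0 ∧ Y = sr 1)) (hbad2 : ¬(X = sr 1 ∧ Y = sr 0)) :
    (X * Y) ^ 2 = 1 := by
  rcases hX with rfl | rfl | rfl <;> rcases hY with rfl | rfl | rfl <;>
    simp_all [pow_two, sr_mul_sr, r_mul_r]

end KernelRA2

noncomputable section
namespace KernelRA2
open SemidirectProduct DihedralGroup Classical

variable {B : Type*} {W : Type*} [Group W] (M : CoxeterMatrix B) (T : Set B)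

lemma chi_aux (t₁ t₂ : {t : B // t ∈ T}) (v : Wc M T)
    (h1 : ∀ s ∉ T, ∀ t ∈ T, M s t = 2 ∨ M s t = 4 ∨ M s t = 0)
    (h2 : ∀ t ∈ T, ∀ t' ∈ T, t ≠ t' → M t t' = 2 ∨ M t t' = 0)
    (hP2 : ¬(t₁ ≠ t₂ ∧ M t₁.1 t₂.1 = 2 ∧ ∃ a ∈ HH M T t₁, ∃ b ∈ HH M T t₂, v = a * b))
    (hP3 : ¬(t₁ = t₂ ∧ ∃ u : {b : B // b ∉ T}, M u.1 t₁.1 = 4 ∧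
      ∃ a ∈ HH M T t₁, ∃ b ∈ HH M T t₁, v = a * sc M T u * b)) :
    ∀ r ∈ rels M T, (FreeGroup.lift (FD M T t₁ t₂ v)) r = 1 := by
  rintro r (⟨t, w, u, rfl⟩ | ⟨t, t', w, rfl⟩) <;>
    rw [map_pow, map_mul, FreeGroup.lift_apply_of, FreeGroup.lift_apply_of]
  · -- relation of type R2
    rcases h1 u.1 u.2 t.1 t.2 with hm | hm | hm
    · -- M u t = 2 : generators are identified
      rw [hm]
      norm_num
      have hswap : FD M T t₁ t₂ v (t, w * sc M T u) = FD M T t₁ t₂ v (t, w) := by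
        have e1 : (t = t₁ ∧ w * sc M T u ∈ HH M T t₁) ↔
            (t = t₁ ∧ w ∈ HH M T t₁) := by
          constructor
          · rintro ⟨rfl, h⟩
            refine ⟨rfl, ?_⟩
            have hsu : sc M T u ∈ HH M T t := Subgroup.subset_closure ⟨u, hm, rfl⟩
            exact (mul_mem_cancel_right hsu).mp h
          · rintro ⟨rfl, h⟩
            refine ⟨rfl, ?_⟩
            have hsu : sc M T u ∈ HH M T t := Subgroup.subset_closure ⟨u, hm, rfl⟩
            exact mul_mem h hsu
        have e2 : (t = t₂ ∧ v⁻¹ * (w * sc M T u) ∈ HH M T t₂) ↔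
            (t = t₂ ∧ v⁻¹ * w ∈ HH M T t₂) := by
          constructor
          · rintro ⟨rfl, h⟩
            refine ⟨rfl, ?_⟩
            have hsu : sc M T u ∈ HH M T t := Subgroup.subset_closure ⟨u, hm, rfl⟩
            rw [← mul_assoc] at h
            exact (mul_mem_cancel_right hsu).mp h
          · rintro ⟨rfl, h⟩
            refine ⟨rfl, ?_⟩
            have hsu : sc M T u ∈ HH M T t := Subgroup.subset_closure ⟨u, hm, rfl⟩
            rw [← mul_assoc]
            exact mul_mem h hsu
        simp only [FD]
        by_cases hc1 : t = t₁ ∧ w ∈ HH M T t₁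
        · rw [if_pos (e1.mpr hc1), if_pos hc1]
        · rw [if_neg (fun h => hc1 (e1.mp h)), if_neg hc1]
          by_cases hc2 : t = t₂ ∧ v⁻¹ * w ∈ HH M T t₂
          · rw [if_pos (e2.mpr hc2), if_pos hc2]
          · rw [if_neg (fun h => hc2 (e2.mp h)), if_neg hc2]
      rw [hswap, FD_invol]
    · -- M u t = 4
      rw [hm]
      norm_num
      apply d_sq _ _ (FD_cases M T t₁ t₂ v _) (FD_cases M T t₁ t₂ v _)
      · rintro ⟨hX, hY⟩
        rw [FD_eq_sr0_iff] at hX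
        rw [FD_eq_sr1_iff] at hY
        obtain ⟨ht1, hw⟩ := hX
        obtain ⟨-, ht2, hv⟩ := hY
        simp only at ht1 ht2 hw hv
        apply hP3
        subst ht1
        constructor
        · exact ht2.symm ▸ rfl
        · refine ⟨u, hm, w, hw, (v⁻¹ * (w * sc M T u))⁻¹, ?_, ?_⟩
          · rw [← ht2] at hv
            exact inv_mem hv
          · group
      · rintro ⟨hX, hY⟩
        rw [FD_eq_sr1_iff] at hX
        rw [FD_eq_sr0_iff] at hY
        obtain ⟨-, ht2, hv⟩ := hX
        obtain ⟨ht1, hwsu⟩ := hY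
        simp only at ht1 ht2 hv hwsu
        apply hP3
        subst ht1
        constructor
        · exact ht2.symm ▸ rfl
        · refine ⟨u, hm, w * sc M T u, hwsu, (v⁻¹ * w)⁻¹, ?_, ?_⟩
          · rw [← ht2] at hv
            exact inv_mem hv
          · have hss : sc M T u * sc M T u = 1 := (csc M T).simple_mul_simple_self u
            rw [mul_assoc w, hss, mul_one, mul_inv_rev, inv_inv, ← mul_assoc,
              mul_inv_cancel, one_mul]
    · rw [hm]
      norm_num
  · -- relation of type R3
    rcases eq_or_ne t t' with rfl | htt
    · rw [M.diagonal t.1, pow_one, FD_invol]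
    · have htt1 : t.1 ≠ t'.1 := fun h => htt (Subtype.ext h)
      rcases h2 t.1 t.2 t'.1 t'.2 htt1 with hm | hm
      · rw [hm]
        apply d_sq _ _ (FD_cases M T t₁ t₂ v _) (FD_cases M T t₁ t₂ v _)
        · rintro ⟨hX, hY⟩
          rw [FD_eq_sr0_iff] at hX
          rw [FD_eq_sr1_iff] at hY
          obtain ⟨ht1, hw⟩ := hX
          obtain ⟨-, ht2, hv⟩ := hY
          simp only at ht1 ht2 hw hv
          subst ht1
          subst ht2
          apply hP2
          refine ⟨htt, hm, w, hw, (v⁻¹ * w)⁻¹, inv_mem hv, ?_⟩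
          rw [mul_inv_rev, inv_inv, ← mul_assoc, mul_inv_cancel, one_mul]
        · rintro ⟨hX, hY⟩
          rw [FD_eq_sr1_iff] at hX
          rw [FD_eq_sr0_iff] at hY
          obtain ⟨-, ht2, hv⟩ := hX
          obtain ⟨ht1, hw⟩ := hY
          simp only at ht1 ht2 hv hw
          subst ht1
          subst ht2
          apply hP2
          refine ⟨htt.symm, ?_, w, hw, (v⁻¹ * w)⁻¹, inv_mem hv, ?_⟩
          · rw [M.symmetric]; exact hm
          · rw [mul_inv_rev, inv_inv, ← mul_assoc, mul_inv_cancel, one_mul]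
      · rw [hm, pow_zero]

end KernelRA2

noncomputable section
namespace KernelRA2
open SemidirectProduct DihedralGroup Classical

variable {B : Type*} {W : Type*} [Group W] (M : CoxeterMatrix B) (T : Set B)
  (cs : CoxeterSystem M W)

lemma orderOf_conj' {G : Type*} [Group G] (g a : G) : orderOf (g * a * g⁻¹) = orderOf a := by
  have h := orderOf_injective (MulAut.conj g).toMonoidHom (MulEquiv.injective _) a
  simpa using h

theorem kernel_dichotomy
    (heven : ∀ t ∈ T, ∀ s ∉ T, Even (M t s))
    (h1 : ∀ s ∉ T, ∀ t ∈ T, M s t = 2 ∨ M s t = 4 ∨ M s t = 0)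
    (h2 : ∀ t ∈ T, ∀ t' ∈ T, t ≠ t' → M t t' = 2 ∨ M t t' = 0)
    (t₁ t₂ : {t : B // t ∈ T}) (v : Wc M T)
    (hne : cs.simple t₁.1 ≠ iota M T cs v * cs.simple t₂.1 * (iota M T cs v)⁻¹) :
    orderOf (cs.simple t₁.1 * (iota M T cs v * cs.simple t₂.1 * (iota M T cs v)⁻¹)) = 2 ∨
      ¬ IsOfFinOrder (cs.simple t₁.1 *
        (iota M T cs v * cs.simple t₂.1 * (iota M T cs v)⁻¹)) := by
  have hx2 : cs.simple t₁.1 * cs.simple t₁.1 = 1 := cs.simple_mul_simple_self t₁.1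
  have hxy_ne : cs.simple t₁.1 * (iota M T cs v * cs.simple t₂.1 * (iota M T cs v)⁻¹) ≠ 1 := by
    intro h
    apply hne
    have hinv := eq_inv_of_mul_eq_one_left h
    have hy2 : (iota M T cs v * cs.simple t₂.1 * (iota M T cs v)⁻¹) *
        (iota M T cs v * cs.simple t₂.1 * (iota M T cs v)⁻¹) = 1 := by
      rw [show (iota M T cs v * cs.simple t₂.1 * (iota M T cs v)⁻¹) *
          (iota M T cs v * cs.simple t₂.1 * (iota M T cs v)⁻¹)
          = iota M T cs v * (cs.simple t₂.1 * cs.simple t₂.1) * (iota M T cs v)⁻¹ from by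
        group]
      rw [cs.simple_mul_simple_self, mul_one, mul_inv_cancel]
    exact hinv.trans (inv_eq_of_mul_eq_one_left hy2)
  by_cases hP1 : t₁ = t₂ ∧ v ∈ HH M T t₁
  · exfalso
    obtain ⟨he, hv⟩ := hP1
    subst he
    exact hne (conj_comm_eq (iotaH_comm M T cs t₁ hv)).symm
  by_cases hP2 : t₁ ≠ t₂ ∧ M t₁.1 t₂.1 = 2 ∧ ∃ a ∈ HH M T t₁, ∃ b ∈ HH M T t₂, v = a * b
  · left
    obtain ⟨-, hM2, a, ha, b, hb, rfl⟩ := hP2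
    exact orderOf_eq_prime (case2_sq M T cs t₁ t₂ hM2 ha hb) hxy_ne
  by_cases hP3 : t₁ = t₂ ∧ ∃ u : {b : B // b ∉ T}, M u.1 t₁.1 = 4 ∧
      ∃ a ∈ HH M T t₁, ∃ b ∈ HH M T t₁, v = a * sc M T u * b
  · left
    obtain ⟨he, u, hu4, a, ha, b, hb, rfl⟩ := hP3
    subst he
    exact orderOf_eq_prime (case3_sq M T cs t₁ u hu4 ha hb) hxy_ne
  · right
    intro hfin
    have hΘx : theta M T cs heven (cs.simple t₁.1) = inl (Aof M T (t₁, 1)) :=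
      theta_simple_T M T cs heven t₁.2
    have hΘt2 : theta M T cs heven (cs.simple t₂.1) = inl (Aof M T (t₂, 1)) :=
      theta_simple_T M T cs heven t₂.2
    have hΘy : theta M T cs heven (iota M T cs v * cs.simple t₂.1 * (iota M T cs v)⁻¹)
        = inl (Aof M T (t₂, v)) := by
      rw [map_mul, map_mul, map_inv, theta_iota, hΘt2, ← map_inv (inr), ← inl_aut, act_of]
      simp only [mul_one]
    have hΘxy : theta M T cs heven
          (cs.simple t₁.1 * (iota M T cs v * cs.simple t₂.1 * (iota M T cs v)⁻¹))
        = inl (Aof M T (t₁, 1) * Aof M T (t₂, v)) := by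
      rw [map_mul, hΘx, hΘy, ← map_mul]
    have hfin1 : IsOfFinOrder (inl (Aof M T (t₁, 1) * Aof M T (t₂, v)) : GK M T) := by
      rw [← hΘxy]
      exact MonoidHom.isOfFinOrder _ hfin
    have hfin2 : IsOfFinOrder (Aof M T (t₁, 1) * Aof M T (t₂, v)) := by
      rw [← orderOf_pos_iff] at hfin1 ⊢
      rwa [orderOf_injective (inl : A M T →* GK M T) inl_injective] at hfin1
    have hchi := MonoidHom.isOfFinOrder
      (PresentedGroup.toGroup (chi_aux M T t₁ t₂ v h1 h2 hP2 hP3)) hfin2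
    rw [map_mul, PresentedGroup.toGroup.of, PresentedGroup.toGroup.of] at hchi
    have hv1 : FD M T t₁ t₂ v (t₁, 1) = sr 0 := by
      unfold FD
      rw [if_pos ⟨rfl, one_mem _⟩]
    have hv2 : FD M T t₁ t₂ v (t₂, v) = sr 1 := by
      unfold FD
      rw [if_neg, if_pos ⟨rfl, by rw [inv_mul_cancel]; exact one_mem _⟩]
      rintro ⟨he, hv⟩
      simp only at he hv
      exact hP1 ⟨he.symm, hv⟩
    rw [hv1, hv2, sr_mul_sr] at hchi
    obtain ⟨n, hn, hpow⟩ := isOfFinOrder_iff_pow_eq_one.mp hchi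
    rw [show ((1 : ZMod 0) - 0) = 1 by ring, r_one_pow, DihedralGroup.one_def] at hpow
    have : (n : ZMod 0) = 0 := by injection hpow
    have : (n : ℤ) = 0 := this
    omega

end KernelRA2

noncomputable section
namespace KernelRA2

variable {B : Type*} {W : Type*} [Group W]

lemma isOfFinOrder_conj_iff {G : Type*} [Group G] (g a : G) :
    IsOfFinOrder (g * a * g⁻¹) ↔ IsOfFinOrder a := by
  rw [← orderOf_pos_iff, ← orderOf_pos_iff, orderOf_conj']

end KernelRA2

theorem kernel_right_angled_iff' {B W : Type*} [Group W] (M : CoxeterMatrix B)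
    (cs : CoxeterSystem M W) (T : Set B)
    (heven : ∀ t ∈ T, ∀ s ∉ T, Even (M t s)) :
    (∀ τ₁ ∈ {x : W | ∃ t ∈ T, ∃ w ∈ Subgroup.closure (cs.simple '' Tᶜ),
        x = w * cs.simple t * w⁻¹},
     ∀ τ₂ ∈ {x : W | ∃ t ∈ T, ∃ w ∈ Subgroup.closure (cs.simple '' Tᶜ),
        x = w * cs.simple t * w⁻¹},
      τ₁ ≠ τ₂ → orderOf (τ₁ * τ₂) = 2 ∨ ¬IsOfFinOrder (τ₁ * τ₂)) ↔
    ((∀ s ∉ T, ∀ t ∈ T, M s t = 2 ∨ M s t = 4 ∨ M s t = 0) ∧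
     (∀ t ∈ T, ∀ t' ∈ T, t ≠ t' → M t t' = 2 ∨ M t t' = 0)) := by
  constructor
  · intro hLHS
    constructor
    · -- condition (1)
      intro s hs t ht
      by_contra hcon
      push_neg at hcon
      obtain ⟨hn2, hn4, hn0⟩ := hcon
      have hts : M t s = M s t := M.symmetric t s
      have hev : Even (M s t) := by rw [← hts]; exact heven t ht s hs
      have hn6 : 6 ≤ M s t := by
        obtain ⟨k, hk⟩ := hev
        omega
      have hmem₁ : cs.simple t ∈ {x : W | ∃ t ∈ T, ∃ w ∈ Subgroup.closure (cs.simple '' Tᶜ),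
          x = w * cs.simple t * w⁻¹} := by
        exact ⟨t, ht, 1, one_mem _, by group⟩
      have hmem₂ : cs.simple s * cs.simple t * (cs.simple s)⁻¹ ∈
          {x : W | ∃ t ∈ T, ∃ w ∈ Subgroup.closure (cs.simple '' Tᶜ),
          x = w * cs.simple t * w⁻¹} := by
        exact ⟨t, ht, cs.simple s, Subgroup.subset_closure ⟨s, hs, rfl⟩, rfl⟩
      have hMts : 6 ≤ M t s := by omega
      have hpow4 : (cs.simple t * cs.simple s) ^ 4 ≠ 1 :=
        KernelRA.simple_mul_pow_ne_one cs (by norm_num) (by omega)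
      have hpow2 : (cs.simple t * cs.simple s) ^ 2 ≠ 1 :=
        KernelRA.simple_mul_pow_ne_one cs (by norm_num) (by omega)
      have hne : cs.simple t ≠ cs.simple s * cs.simple t * (cs.simple s)⁻¹ := by
        intro h
        apply hpow2
        rw [cs.inv_simple] at h
        have hcomm : cs.simple t * cs.simple s = cs.simple s * cs.simple t := by
          conv_lhs => rw [h]
          rw [mul_assoc, mul_assoc, cs.simple_mul_simple_self, mul_one]
        calc (cs.simple t * cs.simple s) ^ 2
            = cs.simple t * (cs.simple s * cs.simple t) * cs.simple s := by rw [sq]; group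
          _ = cs.simple t * (cs.simple t * cs.simple s) * cs.simple s := by rw [← hcomm]
          _ = cs.simple t * cs.simple t * (cs.simple s * cs.simple s) := by group
          _ = 1 := by rw [cs.simple_mul_simple_self, cs.simple_mul_simple_self, one_mul]
      have hprod : cs.simple t * (cs.simple s * cs.simple t * (cs.simple s)⁻¹)
          = (cs.simple t * cs.simple s) ^ 2 := by
        rw [cs.inv_simple, sq]; group
      rcases hLHS _ hmem₁ _ hmem₂ hne with hc | hc
      · apply hpow4
        have := pow_orderOf_eq_one (cs.simple t * (cs.simple s * cs.simple t * (cs.simple s)⁻¹))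
        rw [hc, hprod, ← pow_mul] at this
        exact this
      · apply hc
        rw [hprod]
        apply isOfFinOrder_iff_pow_eq_one.mpr
        refine ⟨M t s, by omega, ?_⟩
        rw [← pow_mul, mul_comm 2 (M t s), pow_mul]
        rw [cs.simple_mul_simple_pow t s, one_pow]
    · -- condition (2)
      intro t ht t' ht' htt
      by_contra hcon
      push_neg at hcon
      obtain ⟨hn2, hn0⟩ := hcon
      have hn1 : M t t' ≠ 1 := M.off_diagonal t t' htt
      have hn3 : 3 ≤ M t t' := by omega
      have hmem₁ : cs.simple t ∈ {x : W | ∃ t ∈ T, ∃ w ∈ Subgroup.closure (cs.simple '' Tᶜ),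
          x = w * cs.simple t * w⁻¹} := ⟨t, ht, 1, one_mem _, by group⟩
      have hmem₂ : cs.simple t' ∈ {x : W | ∃ t ∈ T, ∃ w ∈ Subgroup.closure (cs.simple '' Tᶜ),
          x = w * cs.simple t * w⁻¹} := ⟨t', ht', 1, one_mem _, by group⟩
      have hpow1 : (cs.simple t * cs.simple t') ^ 1 ≠ 1 :=
        KernelRA.simple_mul_pow_ne_one cs (by norm_num) (by omega)
      have hpow2 : (cs.simple t * cs.simple t') ^ 2 ≠ 1 :=
        KernelRA.simple_mul_pow_ne_one cs (by norm_num) (by omega)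
      have hne : cs.simple t ≠ cs.simple t' := by
        intro h
        apply hpow1
        rw [pow_one, h, cs.simple_mul_simple_self]
      rcases hLHS _ hmem₁ _ hmem₂ hne with hc | hc
      · apply hpow2
        have := pow_orderOf_eq_one (cs.simple t * cs.simple t')
        rwa [hc] at this
      · apply hc
        apply isOfFinOrder_iff_pow_eq_one.mpr
        exact ⟨M t t', by omega, cs.simple_mul_simple_pow t t'⟩
  · rintro ⟨h1, h2⟩ τ₁ hτ₁ τ₂ hτ₂ hne
    obtain ⟨t1, ht1, w1, hw1, rfl⟩ := hτ₁
    obtain ⟨t2, ht2, w2, hw2, rfl⟩ := hτ₂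
    have hrange : Subgroup.closure (cs.simple '' Tᶜ) ≤ (KernelRA2.iota M T cs).range := by
      rw [Subgroup.closure_le]
      rintro x ⟨b, hb, rfl⟩
      exact ⟨KernelRA2.sc M T ⟨b, hb⟩, KernelRA2.iota_simple M T cs ⟨b, hb⟩⟩
    obtain ⟨v, hv⟩ := hrange (mul_mem (inv_mem hw1) hw2)
    have key : (w1 * cs.simple t1 * w1⁻¹) * (w2 * cs.simple t2 * w2⁻¹)
        = w1 * (cs.simple t1 * (KernelRA2.iota M T cs v * cs.simple t2 *
            (KernelRA2.iota M T cs v)⁻¹)) * w1⁻¹ := by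
      rw [hv]; group
    have hne' : cs.simple t1 ≠ KernelRA2.iota M T cs v * cs.simple t2 *
        (KernelRA2.iota M T cs v)⁻¹ := by
      intro h
      apply hne
      rw [h, hv]
      group
    rcases KernelRA2.kernel_dichotomy M T cs heven h1 h2 ⟨t1, ht1⟩ ⟨t2, ht2⟩ v hne'
      with hc | hc
    · left
      rw [key, KernelRA2.orderOf_conj']
      exact hc
    · right
      rw [key, KernelRA2.isOfFinOrder_conj_iff]
      exact hc


/-- Under the evenness assumption on `T ⊆ S`, the Coxeter system `(ker φ_T, S_T)` is right-angled
— i.e. for all distinct `τ₁, τ₂ ∈ S_T = {w t w⁻¹ : t ∈ T, w ∈ W_{S∖T}}` the order of `τ₁τ₂` is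
`2` or `∞` — if and only if (1) `m s t ∈ {2, 4, ∞}` for all `s ∈ S∖T`, `t ∈ T`, and
(2) `m t t' ∈ {2, ∞}` for all distinct `t, t' ∈ T`. (In a `CoxeterMatrix`, `0` encodes `∞`.) -/
theorem kernel_right_angled_iff {B W : Type*} [Group W] (M : CoxeterMatrix B)
    (cs : CoxeterSystem M W) (T : Set B)
    (heven : ∀ t ∈ T, ∀ s ∉ T, Even (M t s)) :
    (∀ τ₁ ∈ {x : W | ∃ t ∈ T, ∃ w ∈ Subgroup.closure (cs.simple '' Tᶜ),
        x = w * cs.simple t * w⁻¹},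
     ∀ τ₂ ∈ {x : W | ∃ t ∈ T, ∃ w ∈ Subgroup.closure (cs.simple '' Tᶜ),
        x = w * cs.simple t * w⁻¹},
      τ₁ ≠ τ₂ → orderOf (τ₁ * τ₂) = 2 ∨ ¬IsOfFinOrder (τ₁ * τ₂)) ↔
    ((∀ s ∉ T, ∀ t ∈ T, M s t = 2 ∨ M s t = 4 ∨ M s t = 0) ∧
     (∀ t ∈ T, ∀ t' ∈ T, t ≠ t' → M t t' = 2 ∨ M t t' = 0)) :=
  kernel_right_angled_iff' M cs T heven
end
end
end
end
end
end
end
end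
end

section
/- Let (W,S) be a Coxeter system with S finite. Then every finite subgroup G of W is conjugate to a subgroup of a finite standard parabolic subgroup: there exist w ∈ W and T ⊆ S such that W_T is finite and wGw⁻¹ ⊆ W_T. -/
/-!
Auxiliary development: the standard geometric representation of a Coxeter group,
Tits' positivity theorem for roots, and the theorem that every finite subgroup
of a Coxeter group is conjugate into a finite standard parabolic subgroup.
-/

noncomputable section
namespace TitsAux

open Real CoxeterSystem

variable {B : Type*} [Fintype B] [DecidableEq B]
set_option linter.unusedSectionVars false
set_option linter.unusedTactic false
set_option maxHeartbeats 1000000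

/-- entries of the symmetric bilinear form -/
def kk (M : CoxeterMatrix B) (i j : B) : ℝ :=
  if M i j = 0 then -1 else -Real.cos (Real.pi / (M i j))

lemma kk_symm (M : CoxeterMatrix B) (i j : B) : kk M i j = kk M j i := by
  rw [kk, kk, M.symmetric]

lemma kk_diag (M : CoxeterMatrix B) (i : B) : kk M i i = 1 := by
  simp [kk, M.diagonal i]

lemma kk_off (M : CoxeterMatrix B) {i j : B} (h : M i j ≠ 0) :
    kk M i j = -Real.cos (Real.pi / (M i j)) := by simp [kk, h]

/-- the simple root -/
def al (i : B) : B → ℝ := Pi.single i 1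

def form1 (M : CoxeterMatrix B) (i : B) (x : B → ℝ) : ℝ := ∑ j, kk M i j * x j

lemma form1_add (M : CoxeterMatrix B) (i : B) (x y : B → ℝ) :
    form1 M i (x + y) = form1 M i x + form1 M i y := by
  simp [form1, mul_add, Finset.sum_add_distrib]

lemma form1_smul (M : CoxeterMatrix B) (i : B) (c : ℝ) (x : B → ℝ) :
    form1 M i (c • x) = c * form1 M i x := by
  simp only [form1, Pi.smul_apply, smul_eq_mul, Finset.mul_sum]
  exact Finset.sum_congr rfl fun j _ => by ring

lemma form1_al (M : CoxeterMatrix B) (i j : B) : form1 M i (al j) = kk M i j := by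
  simp [form1, al, Pi.single_apply]

lemma form1_neg (M : CoxeterMatrix B) (i : B) (x : B → ℝ) :
    form1 M i (-x) = -form1 M i x := by
  simp [form1]

lemma form1_sub (M : CoxeterMatrix B) (i : B) (x y : B → ℝ) :
    form1 M i (x - y) = form1 M i x - form1 M i y := by
  simp [sub_eq_add_neg, form1_add, form1_neg]

/-- the simple reflection -/
def sigma (M : CoxeterMatrix B) (i : B) : Module.End ℝ (B → ℝ) where
  toFun x := x - (2 * form1 M i x) • al i
  map_add' x y := by simp [form1_add]; module
  map_smul' c x := by simp [form1_smul]; module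

lemma sigma_apply (M : CoxeterMatrix B) (i : B) (x : B → ℝ) :
    sigma M i x = x - (2 * form1 M i x) • al i := rfl

lemma form1_sigma (M : CoxeterMatrix B) (i : B) (x : B → ℝ) :
    form1 M i (sigma M i x) = -form1 M i x := by
  rw [sigma_apply, form1_sub, form1_smul, form1_al, kk_diag]; ring

lemma sigma_sigma (M : CoxeterMatrix B) (i : B) (x : B → ℝ) :
    sigma M i (sigma M i x) = x := by
  rw [sigma_apply M i (sigma M i x), form1_sigma, sigma_apply]; module

lemma sigma_al_self (M : CoxeterMatrix B) (i : B) : sigma M i (al i) = -al i := by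
  rw [sigma_apply, form1_al, kk_diag]; module

/-- the bilinear form -/
def form (M : CoxeterMatrix B) (x y : B → ℝ) : ℝ := ∑ i, x i * form1 M i y

lemma form_symm (M : CoxeterMatrix B) (x y : B → ℝ) : form M x y = form M y x := by
  unfold form form1
  simp only [Finset.mul_sum]
  rw [Finset.sum_comm]
  exact Finset.sum_congr rfl fun i _ => Finset.sum_congr rfl fun j _ => by rw [kk_symm]; ring

lemma form_al_left (M : CoxeterMatrix B) (i : B) (y : B → ℝ) :
    form M (al i) y = form1 M i y := by
  simp [form, al, Pi.single_apply, Finset.sum_ite_eq]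

lemma form_sub_left (M : CoxeterMatrix B) (x y z : B → ℝ) :
    form M (x - y) z = form M x z - form M y z := by
  simp [form, sub_mul, Finset.sum_sub_distrib]

lemma form_smul_left (M : CoxeterMatrix B) (c : ℝ) (x z : B → ℝ) :
    form M (c • x) z = c * form M x z := by
  simp only [form, Pi.smul_apply, smul_eq_mul, Finset.mul_sum]
  exact Finset.sum_congr rfl fun j _ => by ring

lemma form_sub_right (M : CoxeterMatrix B) (x y z : B → ℝ) :
    form M z (x - y) = form M z x - form M z y := by
  rw [form_symm, form_sub_left, form_symm M z x, form_symm M z y]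

lemma form_smul_right (M : CoxeterMatrix B) (c : ℝ) (x z : B → ℝ) :
    form M z (c • x) = c * form M z x := by
  rw [form_symm, form_smul_left, form_symm M z x]

lemma form_al_right (M : CoxeterMatrix B) (i : B) (y : B → ℝ) :
    form M y (al i) = form1 M i y := by
  rw [form_symm, form_al_left]

lemma form_sigma (M : CoxeterMatrix B) (i : B) (x y : B → ℝ) :
    form M (sigma M i x) (sigma M i y) = form M x y := by
  rw [sigma_apply M i x, sigma_apply M i y, form_sub_left, form_sub_right, form_sub_right,
    form_smul_left, form_smul_right, form_smul_right, form_smul_left, form_al_left,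
    form_al_right, form_al_right, form1_al, kk_diag]
  ring


/-! ### rank two computations -/

section Dihedral

variable (M : CoxeterMatrix B) (i j : B)

/-- a point of the `i,j`-plane -/
def pp (a b : ℝ) : B → ℝ := a • al i + b • al j

lemma form1_pp_i (a b : ℝ) : form1 M i (pp i j a b) = a + kk M i j * b := by
  rw [pp, form1_add, form1_smul, form1_smul, form1_al, form1_al, kk_diag]; ring

lemma form1_pp_j (a b : ℝ) : form1 M j (pp i j a b) = kk M i j * a + b := by
  rw [pp, form1_add, form1_smul, form1_smul, form1_al, form1_al, kk_diag, kk_symm M j i]; ring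

lemma sigma_pp_i (a b : ℝ) :
    sigma M i (pp i j a b) = pp i j (-a - 2 * kk M i j * b) b := by
  rw [sigma_apply, form1_pp_i, pp, pp]; module

lemma sigma_pp_j (a b : ℝ) :
    sigma M j (pp i j a b) = pp i j a (-b - 2 * kk M i j * a) := by
  rw [sigma_apply, form1_pp_j, pp, pp]; module

lemma pp_al : pp i j 1 0 = al i := by rw [pp]; module

lemma pp_congr {a b a' b' : ℝ} (ha : a = a') (hb : b = b') : pp i j a b = pp i j a' b' := by
  rw [ha, hb]


section Fin

variable (M : CoxeterMatrix B) (i j : B)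

/-- half the rotation angle -/
def th : ℝ := Real.pi / (M i j)

lemma two_le_m (hij : i ≠ j) (hm : M i j ≠ 0) : 2 ≤ M i j := by
  rcases Nat.lt_or_ge (M i j) 2 with h | h
  · have h1 := M.off_diagonal i j hij
    omega
  · exact h

lemma th_pos (hm : M i j ≠ 0) : 0 < th M i j := by
  apply div_pos Real.pi_pos
  exact_mod_cast Nat.pos_of_ne_zero hm

lemma th_le (hij : i ≠ j) (hm : M i j ≠ 0) : th M i j ≤ Real.pi / 2 := by
  rw [th]
  apply div_le_div_of_nonneg_left Real.pi_pos.le two_pos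
  exact_mod_cast two_le_m M i j hij hm

lemma sin_th_pos (hij : i ≠ j) (hm : M i j ≠ 0) : 0 < Real.sin (th M i j) :=
  Real.sin_pos_of_pos_of_lt_pi (th_pos M i j hm) (lt_of_le_of_lt (th_le M i j hij hm)
    (by linarith [Real.pi_pos]))

lemma kk_eq_cos (hm : M i j ≠ 0) : kk M i j = -Real.cos (th M i j) := by
  rw [kk, if_neg hm, th]

/-- complex parametrization of the plane -/
def PP (z : ℂ) : B → ℝ :=
  pp i j (z.re - z.im * Real.cos (th M i j) / Real.sin (th M i j))
    (-z.im / Real.sin (th M i j))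

lemma sigma_PP_i (hij : i ≠ j) (hm : M i j ≠ 0) (z : ℂ) :
    sigma M i (PP M i j z) = PP M i j (-(starRingEnd ℂ z)) := by
  have hs := sin_th_pos M i j hij hm
  rw [PP, sigma_pp_i, kk_eq_cos M i j hm, PP]
  apply pp_congr
  · simp only [Complex.neg_re, Complex.conj_re, Complex.neg_im, Complex.conj_im]
    field_simp
    ring
  · simp

lemma exp_re (x : ℝ) : (Complex.exp (x * Complex.I)).re = Real.cos x :=
  Complex.exp_ofReal_mul_I_re x

lemma exp_im (x : ℝ) : (Complex.exp (x * Complex.I)).im = Real.sin x :=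
  Complex.exp_ofReal_mul_I_im x

lemma sigma_PP_j (hij : i ≠ j) (hm : M i j ≠ 0) (z : ℂ) :
    sigma M j (PP M i j z) =
      PP M i j (-(Complex.exp ((2 * th M i j : ℝ) * Complex.I)) * starRingEnd ℂ z) := by
  have hs := sin_th_pos M i j hij hm
  have hpy := Real.sin_sq_add_cos_sq (th M i j)
  rw [PP, sigma_pp_j, kk_eq_cos M i j hm, PP]
  apply pp_congr
  · simp only [Complex.mul_re, Complex.mul_im, Complex.neg_re, Complex.neg_im,
      Complex.conj_re, Complex.conj_im, exp_re, exp_im, Real.cos_two_mul, Real.sin_two_mul]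
    field_simp
    linear_combination (2 * z.im * Real.cos (th M i j)) * hpy
  · simp only [Complex.mul_re, Complex.mul_im, Complex.neg_re, Complex.neg_im,
      Complex.conj_re, Complex.conj_im, exp_re, exp_im, Real.cos_two_mul, Real.sin_two_mul]
    field_simp
    ring

lemma sigma_PP_mul (hij : i ≠ j) (hm : M i j ≠ 0) (z : ℂ) :
    (sigma M i * sigma M j) (PP M i j z) =
      PP M i j (Complex.exp ((-(2 * th M i j) : ℝ) * Complex.I) * z) := by
  have : (sigma M i * sigma M j) (PP M i j z) = sigma M i (sigma M j (PP M i j z)) := rfl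
  rw [this, sigma_PP_j M i j hij hm, sigma_PP_i M i j hij hm]
  congr 1
  rw [map_mul, map_neg, ← Complex.exp_conj]
  simp only [map_mul, Complex.conj_ofReal, Complex.conj_I, RingHom.id_apply,
    Complex.ofReal_neg, neg_mul, mul_neg, neg_neg, Complex.conj_conj]

lemma sigma_PP_pow (hij : i ≠ j) (hm : M i j ≠ 0) (z : ℂ) (n : ℕ) :
    ((sigma M i * sigma M j) ^ n) (PP M i j z) =
      PP M i j (Complex.exp ((n * (-(2 * th M i j)) : ℝ) * Complex.I) * z) := by
  induction n generalizing z with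
  | zero => simp
  | succ n ih =>
    have : ((sigma M i * sigma M j) ^ (n+1)) (PP M i j z)
        = ((sigma M i * sigma M j) ^ n) ((sigma M i * sigma M j) (PP M i j z)) := by
      rw [pow_succ]; rfl
    rw [this, sigma_PP_mul M i j hij hm, ih]
    congr 1
    rw [← mul_assoc, ← Complex.exp_add]
    congr 1
    push_cast
    ring

lemma th_mul (hm : M i j ≠ 0) : (M i j : ℝ) * th M i j = Real.pi := by
  rw [th]
  have : (M i j : ℝ) ≠ 0 := by exact_mod_cast hm
  field_simp

lemma sigma_PP_order (hij : i ≠ j) (hm : M i j ≠ 0) (z : ℂ) :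
    ((sigma M i * sigma M j) ^ (M i j)) (PP M i j z) = PP M i j z := by
  rw [sigma_PP_pow M i j hij hm]
  have h1 : ((M i j : ℝ) * (-(2 * th M i j)) : ℝ) = -(2 * Real.pi) := by
    have := th_mul M i j hm
    ring_nf
    ring_nf at this
    linarith
  rw [h1]
  have h2 : Complex.exp ((-(2 * Real.pi) : ℝ) * Complex.I) = 1 := by
    push_cast
    rw [neg_mul, Complex.exp_neg, Complex.exp_two_pi_mul_I, inv_one]
  rw [h2, one_mul]

/-- decomposition of a vector into plane part and orthogonal part -/
lemma plane_decomp (hij : i ≠ j) (hm : M i j ≠ 0) (x : B → ℝ) :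
    ∃ z : ℂ, ∃ q : B → ℝ, x = PP M i j z + q ∧ form1 M i q = 0 ∧ form1 M j q = 0 := by
  have hs := sin_th_pos M i j hij hm
  have hpy := Real.sin_sq_add_cos_sq (th M i j)
  obtain ⟨a, b, ha, hb⟩ : ∃ a b : ℝ, a + kk M i j * b = form1 M i x ∧
      kk M i j * a + b = form1 M j x := by
    refine ⟨(form1 M i x - kk M i j * form1 M j x) / (Real.sin (th M i j))^2,
      (form1 M j x - kk M i j * form1 M i x) / (Real.sin (th M i j))^2, ?_, ?_⟩
    · rw [kk_eq_cos M i j hm]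
      field_simp
      linear_combination (-form1 M i x) * hpy
    · rw [kk_eq_cos M i j hm]
      field_simp
      linear_combination (-form1 M j x) * hpy
  refine ⟨⟨a - b * Real.cos (th M i j), -b * Real.sin (th M i j)⟩, x - pp i j a b, ?_, ?_, ?_⟩
  · have hPP : PP M i j ⟨a - b * Real.cos (th M i j), -b * Real.sin (th M i j)⟩
        = pp i j a b := by
      rw [PP]
      apply pp_congr
      · field_simp
        ring
      · field_simp
    rw [hPP]
    abel
  · rw [form1_sub, form1_pp_i, ha]; ring
  · rw [form1_sub, form1_pp_j, hb]; ring

lemma sigma_fix (x : B → ℝ) (h : form1 M i x = 0) : sigma M i x = x := by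
  rw [sigma_apply, h]; module

lemma liftable : ∀ i j : B, (sigma M i * sigma M j) ^ (M i j) = 1 := by
  intro i j
  rcases eq_or_ne i j with rfl | hij
  · rw [M.diagonal i, pow_one]
    apply LinearMap.ext
    intro x
    exact sigma_sigma M i x
  rcases eq_or_ne (M i j) 0 with h0 | hm
  · rw [h0, pow_zero]
  apply LinearMap.ext
  intro x
  obtain ⟨z, q, rfl, hqi, hqj⟩ := plane_decomp M i j hij hm x
  rw [Module.End.one_apply, map_add, sigma_PP_order M i j hij hm]
  congr 1
  induction (M i j) with
  | zero => simp
  | succ n ih =>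
    rw [pow_succ]
    have : ((sigma M i * sigma M j) ^ n * (sigma M i * sigma M j)) q
        = ((sigma M i * sigma M j) ^ n) ((sigma M i * sigma M j) q) := rfl
    rw [this]
    have h2 : (sigma M i * sigma M j) q = q := by
      have : (sigma M i * sigma M j) q = sigma M i (sigma M j q) := rfl
      rw [this, sigma_fix M j q hqj, sigma_fix M i q hqi]
    rw [h2, ih]

/-- the product of reflections along an alternating word -/
def prodAlt (n : ℕ) : Module.End ℝ (B → ℝ) :=
  ((alternatingWord i j n).map (sigma M)).prod

lemma prodAlt_zero : prodAlt M i j 0 = 1 := rfl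

lemma prodAlt_succ (n : ℕ) :
    prodAlt M i j (n + 1) = sigma M (if Even n then j else i) * prodAlt M i j n := by
  rw [prodAlt, alternatingWord_succ', List.map_cons, List.prod_cons, prodAlt]

/-- the complex number tracking the image of `al i` -/
def Zc (n : ℕ) : ℂ :=
  if Even n then Complex.exp ((-(n * th M i j) : ℝ) * Complex.I)
  else -Complex.exp (((n + 1) * th M i j : ℝ) * Complex.I)

lemma PP_one : PP M i j 1 = pp i j 1 0 := by
  rw [PP]
  apply pp_congr <;> simp

lemma altA (hij : i ≠ j) (hm : M i j ≠ 0) (n : ℕ) :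
    prodAlt M i j n (al i) = PP M i j (Zc M i j n) := by
  induction n with
  | zero =>
    rw [prodAlt_zero, Zc, if_pos Even.zero]
    simp only [Nat.cast_zero, zero_mul, neg_zero, Complex.ofReal_zero, zero_mul,
      Complex.exp_zero, Module.End.one_apply]
    rw [PP_one, pp_al]
  | succ n ih =>
    rw [prodAlt_succ]
    have hmul : (sigma M (if Even n then j else i) * prodAlt M i j n) (al i)
        = sigma M (if Even n then j else i) (prodAlt M i j n (al i)) := rfl
    rw [hmul, ih]
    by_cases hev : Even n
    · rw [if_pos hev, sigma_PP_j M i j hij hm]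
      congr 1
      rw [Zc, if_pos hev, Zc, if_neg (by simp [Nat.even_add_one, hev] : ¬ Even (n+1))]
      rw [← Complex.exp_conj]
      simp only [map_mul, Complex.conj_ofReal, Complex.conj_I, mul_neg, neg_mul, neg_neg]
      rw [← Complex.exp_add]
      congr 2
      push_cast
      ring
    · rw [if_neg hev, sigma_PP_i M i j hij hm]
      congr 1
      rw [Zc, if_neg hev, Zc, if_pos (Nat.even_add_one.mpr hev)]
      rw [map_neg, ← Complex.exp_conj, neg_neg]
      simp only [map_mul, Complex.conj_ofReal, Complex.conj_I, mul_neg]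
      congr 2
      push_cast
      ring

lemma altPos_fin (hij : i ≠ j) (hm : M i j ≠ 0) (n : ℕ) (hn : n < M i j) :
    ∃ c1 c2 : ℝ, 0 ≤ c1 ∧ 0 ≤ c2 ∧ prodAlt M i j n (al i) = pp i j c1 c2 := by
  have hs := sin_th_pos M i j hij hm
  have hth := th_pos M i j hm
  have hsin : ∀ k : ℕ, k ≤ M i j → 0 ≤ Real.sin (k * th M i j) := by
    intro k hk
    apply Real.sin_nonneg_of_nonneg_of_le_pi
    · positivity
    · rw [← th_mul M i j hm]
      have : (k : ℝ) ≤ (M i j : ℝ) := by exact_mod_cast hk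
      nlinarith
  refine ⟨(if Even n then Real.sin ((n+1) * th M i j) else Real.sin (n * th M i j))
      / Real.sin (th M i j),
    (if Even n then Real.sin (n * th M i j) else Real.sin ((n+1) * th M i j))
      / Real.sin (th M i j), ?_, ?_, ?_⟩
  · apply div_nonneg _ hs.le
    split_ifs
    · exact_mod_cast hsin (n+1) (by omega)
    · exact hsin n (by omega)
  · apply div_nonneg _ hs.le
    split_ifs
    · exact hsin n (by omega)
    · exact_mod_cast hsin (n+1) (by omega)
  · rw [altA M i j hij hm, PP, Zc]
    by_cases hev : Even n
    · rw [if_pos hev, if_pos hev, if_pos hev]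
      apply pp_congr
      · rw [exp_re, exp_im]
        have h1 : Real.sin (((n:ℝ)+1) * th M i j)
            = Real.sin (n * th M i j) * Real.cos (th M i j)
              + Real.cos (n * th M i j) * Real.sin (th M i j) := by
          rw [← Real.sin_add]; ring_nf
        rw [Real.cos_neg, Real.sin_neg, h1]
        field_simp
        ring
      · rw [exp_im, Real.sin_neg]
        field_simp
    · rw [if_neg hev, if_neg hev, if_neg hev]
      apply pp_congr
      · simp only [Complex.neg_re, Complex.neg_im, exp_re, exp_im]
        have h1 : Real.sin ((n:ℝ) * th M i j)
            = Real.sin (((n:ℝ)+1) * th M i j) * Real.cos (th M i j)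
              - Real.cos (((n:ℝ)+1) * th M i j) * Real.sin (th M i j) := by
          rw [← Real.sin_sub]; ring_nf
        rw [h1]
        field_simp
        ring
      · simp only [Complex.neg_re, Complex.neg_im, exp_im]
        field_simp

lemma kk_inf (hm : M i j = 0) : kk M i j = -1 := by rw [kk, if_pos hm]

lemma altPos_inf (hm : M i j = 0) (n : ℕ) :
    prodAlt M i j n (al i)
      = pp i j (if Even n then (n:ℝ)+1 else (n:ℝ)) (if Even n then (n:ℝ) else (n:ℝ)+1) := by
  induction n with
  | zero =>
    rw [prodAlt_zero, if_pos Even.zero, if_pos Even.zero]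
    simp only [Nat.cast_zero, Module.End.one_apply, zero_add]
    rw [pp_al]
  | succ n ih =>
    rw [prodAlt_succ]
    have hmul : (sigma M (if Even n then j else i) * prodAlt M i j n) (al i)
        = sigma M (if Even n then j else i) (prodAlt M i j n (al i)) := rfl
    rw [hmul, ih]
    by_cases hev : Even n
    · rw [if_pos hev, if_pos hev, if_pos hev, sigma_pp_j, kk_inf M i j hm,
        if_neg (by simp [Nat.even_add_one, hev] : ¬ Even (n+1)),
        if_neg (by simp [Nat.even_add_one, hev] : ¬ Even (n+1))]
      apply pp_congr <;> push_cast <;> ring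
    · rw [if_neg hev, if_neg hev, if_neg hev, sigma_pp_i, kk_inf M i j hm,
        if_pos (Nat.even_add_one.mpr hev), if_pos (Nat.even_add_one.mpr hev)]
      apply pp_congr <;> push_cast <;> ring

/-- rank-two positivity: the image of a simple root under a short alternating word
is a nonnegative combination of the two simple roots -/
lemma rank2 (hij : i ≠ j) (n : ℕ) (hn : M i j ≠ 0 → n < M i j) :
    ∃ c1 c2 : ℝ, 0 ≤ c1 ∧ 0 ≤ c2 ∧
      prodAlt M i j n (al i) = c1 • al i + c2 • al j := by
  rcases eq_or_ne (M i j) 0 with h0 | hm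
  · exact ⟨_, _, by positivity, by positivity, altPos_inf M i j h0 n⟩
  · obtain ⟨c1, c2, h1, h2, h3⟩ := altPos_fin M i j hij hm n (hn hm)
    exact ⟨c1, c2, h1, h2, h3⟩

end Fin

end Dihedral



lemma sigma_coord (M : CoxeterMatrix B) (i : B) (x : B → ℝ) (b : B) (hb : b ≠ i) :
    sigma M i x b = x b := by
  rw [sigma_apply]
  simp [al, Pi.single_apply, hb]

lemma form_al_al (M : CoxeterMatrix B) (i : B) : form M (al i) (al i) = 1 := by
  rw [form_al_left, form1_al, kk_diag]

lemma form_zero (M : CoxeterMatrix B) : form M 0 0 = (0 : ℝ) := by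
  simp [form, form1]

lemma form_smul_smul (M : CoxeterMatrix B) (c d : ℝ) (x y : B → ℝ) :
    form M (c • x) (d • y) = c * d * form M x y := by
  rw [form_smul_left, form_smul_right]
  ring

lemma rank2' (M : CoxeterMatrix B) (i j : B) (hij : i ≠ j) (n : ℕ)
    (hn : M i j ≠ 0 → n < M i j) :
    ∃ c1 c2 : ℝ, 0 ≤ c1 ∧ 0 ≤ c2 ∧
      ((alternatingWord i j n).map (sigma M)).prod (al i) = c1 • al i + c2 • al j := by
  obtain ⟨c1, c2, h1, h2, h3⟩ := rank2 M i j hij n hn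
  rw [prodAlt] at h3
  exact ⟨c1, c2, h1, h2, h3⟩


variable {W : Type*} [Group W] (M : CoxeterMatrix B) (cs : CoxeterSystem M W)

/-- the geometric representation -/
def rho : W →* Module.End ℝ (B → ℝ) := cs.lift ⟨fun i => sigma M i, liftable M⟩

lemma rho_simple (i : B) : rho M cs (cs.simple i) = sigma M i :=
  cs.lift_apply_simple (liftable M) i

lemma rho_mul_apply (w₁ w₂ : W) (x : B → ℝ) :
    rho M cs (w₁ * w₂) x = rho M cs w₁ (rho M cs w₂ x) := by
  rw [map_mul]; rfl

lemma rho_wordProd (ω : List B) :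
    rho M cs (cs.wordProd ω) = (ω.map (sigma M)).prod := by
  induction ω with
  | nil => rw [wordProd_nil, map_one]; rfl
  | cons a ω ih => rw [wordProd_cons, map_mul, List.map_cons, List.prod_cons, ih, rho_simple]

/-- positivity of a vector (componentwise) -/
def Pos (x : B → ℝ) : Prop := ∀ b, 0 ≤ x b

lemma Pos_al (i : B) : Pos (al i) := by
  intro b
  rw [al, Pi.single_apply]
  split_ifs <;> norm_num

lemma Pos_comb {x y : B → ℝ} {c1 c2 : ℝ} (h1 : 0 ≤ c1) (h2 : 0 ≤ c2)
    (hx : Pos x) (hy : Pos y) : Pos (c1 • x + c2 • y) := by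
  intro b
  have := hx b; have := hy b
  simp only [Pi.add_apply, Pi.smul_apply, smul_eq_mul]
  nlinarith


lemma wordProd_alt_succ (a b : B) (m : ℕ) :
    cs.wordProd (alternatingWord a b (m + 1))
      = cs.simple (if Even m then b else a) * cs.wordProd (alternatingWord a b m) := by
  rw [alternatingWord_succ', wordProd_cons]

/-- multiplying an alternating word by a letter on the left -/
lemma prepend_alt (a b x : B) (hx : x = a ∨ x = b) (k : ℕ) :
    ∃ (a' b' : B) (k' : ℕ), k' ≤ k + 1 ∧ ((a' = a ∧ b' = b) ∨ (a' = b ∧ b' = a)) ∧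
      cs.simple x * cs.wordProd (alternatingWord a b k)
        = cs.wordProd (alternatingWord a' b' k') := by
  match k with
  | 0 =>
    rcases hx with rfl | rfl
    · refine ⟨b, x, 1, by omega, Or.inr ⟨rfl, rfl⟩, ?_⟩
      have h1 : alternatingWord x b 0 = ([] : List B) := rfl
      have h2 : alternatingWord b x 1 = [x] := rfl
      rw [h1, h2, wordProd_nil, mul_one, wordProd_singleton]
    · refine ⟨a, x, 1, by omega, Or.inl ⟨rfl, rfl⟩, ?_⟩
      have h1 : alternatingWord a x 0 = ([] : List B) := rfl
      have h2 : alternatingWord a x 1 = [x] := rfl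
      rw [h1, h2, wordProd_nil, mul_one, wordProd_singleton]
  | (m + 1) =>
    by_cases hxh : x = (if Even m then b else a)
    · refine ⟨a, b, m, by omega, Or.inl ⟨rfl, rfl⟩, ?_⟩
      rw [wordProd_alt_succ M cs a b m, ← hxh, ← mul_assoc, cs.simple_mul_simple_self, one_mul]
    · have hx' : x = (if Even (m + 1) then b else a) := by
        rcases hx with rfl | rfl <;> by_cases hev : Even m <;>
          simp_all [Nat.even_add_one]
      refine ⟨a, b, m + 2, by omega, Or.inl ⟨rfl, rfl⟩, ?_⟩
      rw [wordProd_alt_succ M cs a b (m + 1), ← hx']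

/-- Tits' key positivity theorem -/
theorem keyT (w : W) (i : B) (hdes : ¬cs.IsRightDescent w i) :
    Pos (rho M cs w (al i)) := by
  suffices h : ∀ (n : ℕ) (w : W), cs.length w = n → ∀ i, ¬cs.IsRightDescent w i →
      Pos (rho M cs w (al i)) from h _ w rfl i hdes
  clear hdes w i
  classical
  intro n
  induction n using Nat.strong_induction_on with
  | _ n IH =>
  intro w hw i hdes
  rcases eq_or_ne w 1 with rfl | hne
  · rw [map_one]
    exact Pos_al i
  obtain ⟨t, ht⟩ := cs.exists_rightDescent_of_ne_one hne
  have hti : t ≠ i := fun h => hdes (h ▸ ht)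
  have hdes' : cs.length (w * cs.simple i) = cs.length w + 1 := by
    rcases cs.length_mul_simple w i with h | h
    · exact h
    · exact absurd (by omega : cs.length (w * cs.simple i) < cs.length w) hdes
  -- the predicate for minimization
  set Pk : ℕ → Prop := fun k => ∃ (v : W) (a b : B) (m : ℕ),
    ((a = i ∧ b = t) ∨ (a = t ∧ b = i)) ∧ cs.length v = k ∧
    w = v * cs.wordProd (alternatingWord a b m) ∧ cs.length w = cs.length v + m with hPk
  have hPk0 : Pk (cs.length (w * cs.simple t)) := by
    have hlt : cs.length (w * cs.simple t) + 1 = cs.length w := by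
      rcases cs.length_mul_simple w t with h | h
      · exact absurd (by omega : ¬ cs.length (w * cs.simple t) < cs.length w) (not_not.mpr ht)
      · exact h
    refine ⟨w * cs.simple t, i, t, 1, Or.inl ⟨rfl, rfl⟩, rfl, ?_, by omega⟩
    have h2 : alternatingWord i t 1 = [t] := rfl
    rw [h2, wordProd_singleton, mul_assoc, cs.simple_mul_simple_self, mul_one]
  -- choose a coset representative of minimal length
  have hex : ∃ k, Pk k := ⟨_, hPk0⟩
  obtain ⟨v, a, b, m, hab, hvlen, hvw, hsum⟩ := Nat.find_spec hex
  have hmin : ∀ k, k < Nat.find hex → ¬ Pk k := fun k hk => Nat.find_min hex hk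
  have hvltw : cs.length v < cs.length w := by
    have h1 : Nat.find hex ≤ cs.length (w * cs.simple t) := Nat.find_le hPk0
    have hlt : cs.length (w * cs.simple t) < cs.length w := ht
    omega
  -- the minimal representative has no descent at i nor at t
  have hnodesc : ∀ x : B, (x = i ∨ x = t) → ¬cs.IsRightDescent v x := by
    intro x hx hdx
    have hvx : cs.length (v * cs.simple x) + 1 = cs.length v := by
      rcases cs.length_mul_simple v x with h | h
      · exact absurd (by omega : ¬ cs.length (v * cs.simple x) < cs.length v)
          (not_not.mpr hdx)
      · exact h
    have hx' : x = a ∨ x = b := by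
      rcases hab with ⟨h1, h2⟩ | ⟨h1, h2⟩ <;> rw [h1, h2] <;> tauto
    obtain ⟨a', b', k', hk', hab', heq⟩ := prepend_alt M cs a b x hx' m
    have hw2 : w = (v * cs.simple x) * cs.wordProd (alternatingWord a' b' k') := by
      rw [← heq, hvw, mul_assoc, ← mul_assoc (cs.simple x) (cs.simple x),
        cs.simple_mul_simple_self, one_mul]
    have hchain : cs.length w ≤ cs.length (v * cs.simple x) + k' := by
      calc cs.length w ≤ cs.length (v * cs.simple x)
            + cs.length (cs.wordProd (alternatingWord a' b' k')) := by
            rw [hw2]; exact cs.length_mul_le _ _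
      _ ≤ cs.length (v * cs.simple x) + k' := by
            have := cs.length_wordProd_le (alternatingWord a' b' k')
            rw [length_alternatingWord] at this
            omega
    have hk'' : cs.length w = cs.length (v * cs.simple x) + k' := by omega
    apply hmin (cs.length (v * cs.simple x)) (by omega)
    refine ⟨v * cs.simple x, a', b', k', ?_, rfl, hw2, hk''⟩
    rcases hab' with ⟨h3, h4⟩ | ⟨h3, h4⟩ <;> rcases hab with ⟨h1, h2⟩ | ⟨h1, h2⟩
    · exact Or.inl ⟨h3.trans h1, h4.trans h2⟩
    · exact Or.inr ⟨h3.trans h1, h4.trans h2⟩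
    · exact Or.inr ⟨h3.trans h2, h4.trans h1⟩
    · exact Or.inl ⟨h3.trans h2, h4.trans h1⟩
  -- the alternating word cannot end with the letter i
  have hnoti : ∀ k : ℕ, 1 ≤ k → w = v * cs.wordProd (alternatingWord t i k)
      → cs.length w = cs.length v + k → False := by
    intro k hk1 hwk hsumk
    obtain ⟨k', rfl⟩ : ∃ k', k = k' + 1 := ⟨k - 1, by omega⟩
    have hconc : cs.wordProd (alternatingWord t i (k' + 1))
        = cs.wordProd (alternatingWord i t k') * cs.simple i := by
      rw [alternatingWord_succ, ← wordProd_concat]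
    have hwsi : w * cs.simple i = v * cs.wordProd (alternatingWord i t k') := by
      rw [hwk, hconc, mul_assoc, mul_assoc, cs.simple_mul_simple_self, mul_one]
    have : cs.length (w * cs.simple i) ≤ cs.length v + k' := by
      calc cs.length (w * cs.simple i)
          ≤ cs.length v + cs.length (cs.wordProd (alternatingWord i t k')) := by
            rw [hwsi]; exact cs.length_mul_le _ _
      _ ≤ cs.length v + k' := by
            have := cs.length_wordProd_le (alternatingWord i t k')
            rw [length_alternatingWord] at this
            omega
    omega
  -- hence the pair is (i, t)
  have habit : a = i ∧ b = t := by
    rcases hab with h | ⟨rfl, rfl⟩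
    · exact h
    exfalso
    rcases Nat.eq_zero_or_pos m with rfl | hm1
    · simp only [show alternatingWord a b 0 = ([] : List B) from rfl, wordProd_nil,
        mul_one] at hvw
      rw [← hvw] at hvltw
      omega
    · exact hnoti m hm1 hvw hsum
  obtain ⟨rfl, rfl⟩ := habit
  have hmlt : M a b ≠ 0 → m < M a b := by
    intro hMne
    have hred : m ≤ M a b := by
      by_contra hcon
      push_neg at hcon
      have hnotred : ¬ cs.IsReduced (alternatingWord a b m) :=
        cs.not_isReduced_alternatingWord a b hMne hcon
      apply hnotred
      have h1 : cs.length (cs.wordProd (alternatingWord a b m)) = m := by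
        have h2 := cs.length_wordProd_le (alternatingWord a b m)
        rw [length_alternatingWord] at h2
        have h3 : cs.length w ≤ cs.length v
            + cs.length (cs.wordProd (alternatingWord a b m)) := by
          rw [hvw]; exact cs.length_mul_le _ _
        omega
      unfold CoxeterSystem.IsReduced
      rw [h1, length_alternatingWord]
    rcases Nat.lt_or_ge m (M a b) with h | h
    · exact h
    exfalso
    have hm : m = M a b := by omega
    have hbraid : cs.wordProd (alternatingWord a b m) = cs.wordProd (alternatingWord b a m) := by
      have hsub := cs.prod_alternatingWord_eq_prod_alternatingWord_sub a b m
        (by omega : m ≤ M a b * 2)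
      rwa [(by omega : M a b * 2 - m = m)] at hsub
    have hm1 : 1 ≤ m := by omega
    exact hnoti m hm1 (by rw [hvw, hbraid]) hsum
  -- apply the rank-two computation
  obtain ⟨c1, c2, hc1, hc2, hcomb⟩ := rank2' M a b (Ne.symm hti) m hmlt
  have hrho : rho M cs w (al a) = c1 • rho M cs v (al a) + c2 • rho M cs v (al b) := by
    rw [hvw, rho_mul_apply, rho_wordProd, hcomb, map_add, map_smul, map_smul]
  rw [hrho]
  exact Pos_comb hc1 hc2
    (IH (cs.length v) (by omega) v rfl a (hnodesc a (Or.inl rfl)))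
    (IH (cs.length v) (by omega) v rfl b (hnodesc b (Or.inr rfl)))


/-! ### roots -/

lemma rho_inv_apply (w : W) (x : B → ℝ) : rho M cs w⁻¹ (rho M cs w x) = x := by
  rw [← rho_mul_apply, inv_mul_cancel, map_one, Module.End.one_apply]

lemma rho_inv_apply' (w : W) (x : B → ℝ) : rho M cs w (rho M cs w⁻¹ x) = x := by
  rw [← rho_mul_apply, mul_inv_cancel, map_one, Module.End.one_apply]

/-- negativity of a vector -/
def Neg' (x : B → ℝ) : Prop := ∀ b, x b ≤ 0

lemma keyT' (w : W) (i : B) (hdes : cs.IsRightDescent w i) :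
    Neg' (rho M cs w (al i)) := by
  have hw : w = (w * cs.simple i) * cs.simple i := by
    rw [mul_assoc, cs.simple_mul_simple_self, mul_one]
  have hne : ¬ cs.IsRightDescent (w * cs.simple i) i := by
    intro hcon
    rw [CoxeterSystem.IsRightDescent, mul_assoc, cs.simple_mul_simple_self, mul_one] at hcon
    exact absurd (lt_trans hcon hdes) (lt_irrefl _)
  have hpos := keyT M cs (w * cs.simple i) i hne
  intro b
  rw [hw, rho_mul_apply, rho_simple, sigma_al_self, map_neg]
  simpa using hpos b

/-- the roots of the geometric representation -/
def IsRoot (γ : B → ℝ) : Prop := ∃ (w : W) (i : B), γ = rho M cs w (al i)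

lemma isRoot_al (i : B) : IsRoot M cs (al i) := ⟨1, i, by rw [map_one]; rfl⟩

lemma isRoot_rho (w : W) {γ : B → ℝ} (h : IsRoot M cs γ) : IsRoot M cs (rho M cs w γ) := by
  obtain ⟨v, i, rfl⟩ := h
  exact ⟨w * v, i, by rw [rho_mul_apply]⟩

lemma isRoot_neg {γ : B → ℝ} (h : IsRoot M cs γ) : IsRoot M cs (-γ) := by
  obtain ⟨v, i, rfl⟩ := h
  refine ⟨v * cs.simple i, i, ?_⟩
  rw [rho_mul_apply, rho_simple, sigma_al_self, map_neg]

lemma isRoot_sigma (i : B) {γ : B → ℝ} (h : IsRoot M cs γ) :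
    IsRoot M cs (sigma M i γ) := by
  have := isRoot_rho M cs (cs.simple i) h
  rwa [rho_simple] at this

lemma form_invariant (w : W) (x y : B → ℝ) :
    form M (rho M cs w x) (rho M cs w y) = form M x y := by
  induction w using cs.simple_induction_left with
  | one => rw [map_one]; rfl
  | mul_simple_left w i ih =>
    rw [rho_mul_apply, rho_mul_apply, rho_simple, form_sigma, ih]

lemma root_form_one {γ : B → ℝ} (h : IsRoot M cs γ) : form M γ γ = 1 := by
  obtain ⟨w, i, rfl⟩ := h
  rw [form_invariant, form_al_al]

lemma root_ne_zero {γ : B → ℝ} (h : IsRoot M cs γ) : γ ≠ 0 := by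
  intro hcon
  have h1 := root_form_one M cs h
  rw [hcon, form_zero] at h1
  norm_num at h1

lemma root_trichotomy {γ : B → ℝ} (h : IsRoot M cs γ) : Pos γ ∨ Neg' γ := by
  obtain ⟨w, i, rfl⟩ := h
  by_cases hd : cs.IsRightDescent w i
  · exact Or.inr (keyT' M cs w i hd)
  · exact Or.inl (keyT M cs w i hd)

lemma pos_neg_eq_zero {γ : B → ℝ} (h1 : Pos γ) (h2 : Neg' γ) : γ = 0 := by
  funext b
  exact le_antisymm (h2 b) (h1 b)

lemma root_pos_not_neg {γ : B → ℝ} (h : IsRoot M cs γ) (hp : Pos γ) : ¬ Neg' γ :=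
  fun hn => root_ne_zero M cs h (pos_neg_eq_zero hp hn)

/-- a positive root made negative by a simple reflection is the corresponding simple root -/
lemma flip_lemma {γ : B → ℝ} (i : B) (h : IsRoot M cs γ) (hp : Pos γ)
    (hn : Neg' (sigma M i γ)) : γ = al i := by
  have hcoord : ∀ b, b ≠ i → γ b = 0 := by
    intro b hb
    have h1 := hn b
    rw [sigma_coord M i γ b hb] at h1
    exact le_antisymm h1 (hp b)
  have hγ : γ = (γ i) • al i := by
    funext b
    by_cases hb : b = i
    · subst hb
      simp [al, Pi.single_apply]
    · rw [hcoord b hb]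
      simp [al, Pi.single_apply, hb]
  have hform := root_form_one M cs h
  rw [hγ, form_smul_smul, form_al_al, mul_one] at hform
  have : γ i = 1 ∨ γ i = -1 := by
    rcases mul_self_eq_one_iff.mp hform with h | h
    · exact Or.inl h
    · exact Or.inr h
  rcases this with h1 | h1
  · rw [hγ, h1, one_smul]
  · exfalso
    rw [h1] at hγ
    have h2 : γ i = -1 := by rw [hγ]; simp [al, Pi.single_apply]
    linarith [hp i]


/-- the inversion set of `w`: positive roots sent to negative ones -/
def NN (w : W) : Set (B → ℝ) :=
  {γ | IsRoot M cs γ ∧ Pos γ ∧ Neg' (rho M cs w γ)}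

lemma sigma_injective (i : B) : Function.Injective (sigma M i) :=
  Function.LeftInverse.injective (g := sigma M i) (sigma_sigma M i)

lemma NN_subset (w : W) (i : B) (hd : cs.IsRightDescent w i) :
    NN M cs w ⊆ insert (al i) (sigma M i '' NN M cs (w * cs.simple i)) := by
  intro γ ⟨hroot, hpos, hneg⟩
  by_cases hγ : γ = al i
  · exact Set.mem_insert_iff.mpr (Or.inl hγ)
  right
  have hδroot : IsRoot M cs (sigma M i γ) := isRoot_sigma M cs i hroot
  have hδpos : Pos (sigma M i γ) := by
    rcases root_trichotomy M cs hδroot with h | h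
    · exact h
    · exact absurd (flip_lemma M cs i hroot hpos h) hγ
  refine ⟨sigma M i γ, ⟨hδroot, hδpos, ?_⟩, sigma_sigma M i γ⟩
  have : rho M cs (w * cs.simple i) (sigma M i γ) = rho M cs w γ := by
    rw [rho_mul_apply, rho_simple, sigma_sigma]
  rw [this]
  exact hneg

lemma NN_finite (w : W) : (NN M cs w).Finite := by
  suffices h : ∀ (n : ℕ) (w : W), cs.length w = n → (NN M cs w).Finite from h _ w rfl
  intro n
  induction n using Nat.strong_induction_on with
  | _ n IH =>
  intro w hw
  rcases eq_or_ne w 1 with rfl | hne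
  · apply Set.Finite.subset (Set.finite_empty)
    intro γ ⟨hroot, hpos, hneg⟩
    rw [map_one] at hneg
    exact (root_pos_not_neg M cs hroot hpos) hneg
  obtain ⟨i, hi⟩ := cs.exists_rightDescent_of_ne_one hne
  have hlen : cs.length (w * cs.simple i) < n := by
    rw [← hw]; exact hi
  have hfin := IH _ hlen (w * cs.simple i) rfl
  exact Set.Finite.subset ((hfin.image _).insert _) (NN_subset M cs w i hi)

lemma NN_superset (w : W) (i : B) (hd : cs.IsRightDescent w i) :
    insert (al i) (sigma M i '' NN M cs (w * cs.simple i)) ⊆ NN M cs w := by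
  have hnd : ¬ cs.IsRightDescent (w * cs.simple i) i := by
    intro hcon
    rw [CoxeterSystem.IsRightDescent, mul_assoc, cs.simple_mul_simple_self, mul_one] at hcon
    exact absurd (lt_trans hcon hd) (lt_irrefl _)
  have hwsi : Pos (rho M cs (w * cs.simple i) (al i)) := keyT M cs _ i hnd
  intro γ hγ
  rcases Set.mem_insert_iff.mp hγ with rfl | ⟨δ, hδ, rfl⟩
  · refine ⟨isRoot_al M cs i, Pos_al i, ?_⟩
    have : rho M cs w (al i) = rho M cs (w * cs.simple i) (sigma M i (al i)) := by
      rw [← rho_simple M cs i, ← rho_mul_apply, mul_assoc,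
        cs.simple_mul_simple_self, mul_one]
    rw [this, sigma_al_self, map_neg]
    intro b
    simpa using hwsi b
  · obtain ⟨hδroot, hδpos, hδneg⟩ := hδ
    have hδne : δ ≠ al i := by
      rintro rfl
      exact root_pos_not_neg M cs (isRoot_rho M cs (w * cs.simple i) (isRoot_al M cs i)) hwsi hδneg
    have hσroot : IsRoot M cs (sigma M i δ) := isRoot_sigma M cs i hδroot
    have hσpos : Pos (sigma M i δ) := by
      rcases root_trichotomy M cs hσroot with h | h
      · exact h
      · exact absurd (flip_lemma M cs i hδroot hδpos h) hδne
    refine ⟨hσroot, hσpos, ?_⟩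
    have : rho M cs w (sigma M i δ) = rho M cs (w * cs.simple i) δ := by
      rw [rho_mul_apply, rho_simple]
    rw [this]
    exact hδneg

lemma al_not_mem_image (w : W) (i : B) :
    al i ∉ sigma M i '' NN M cs (w * cs.simple i) := by
  rintro ⟨δ, ⟨_, hδpos, _⟩, hδeq⟩
  have : δ = sigma M i (al i) := by
    rw [← hδeq, sigma_sigma]
  rw [sigma_al_self] at this
  have h1 := hδpos i
  rw [this] at h1
  simp [al, Pi.single_apply] at h1
  linarith

lemma length_le_ncard (w : W) : cs.length w ≤ (NN M cs w).ncard := by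
  suffices h : ∀ (n : ℕ) (w : W), cs.length w = n → cs.length w ≤ (NN M cs w).ncard from
    h _ w rfl
  intro n
  induction n using Nat.strong_induction_on with
  | _ n IH =>
  intro w hw
  rcases eq_or_ne w 1 with rfl | hne
  · simp
  obtain ⟨i, hi⟩ := cs.exists_rightDescent_of_ne_one hne
  have hlen : cs.length (w * cs.simple i) < n := by rw [← hw]; exact hi
  have hlen' : cs.length (w * cs.simple i) + 1 = cs.length w := by
    rcases cs.length_mul_simple w i with h | h
    · omega
    · exact h
  have hIH := IH _ hlen (w * cs.simple i) rfl
  have himg : (sigma M i '' NN M cs (w * cs.simple i)).ncard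
      = (NN M cs (w * cs.simple i)).ncard :=
    Set.ncard_image_of_injective _ (sigma_injective M i)
  have hfin : (sigma M i '' NN M cs (w * cs.simple i)).Finite :=
    (NN_finite M cs (w * cs.simple i)).image _
  have hinsert : (insert (al i) (sigma M i '' NN M cs (w * cs.simple i))).ncard
      = (NN M cs (w * cs.simple i)).ncard + 1 := by
    rw [Set.ncard_insert_of_notMem (al_not_mem_image M cs w i) hfin, himg]
  have hsub := Set.ncard_le_ncard (NN_superset M cs w i hi) (NN_finite M cs w)
  omega

/-- the set of elements of bounded length is finite -/
lemma length_bounded_finite (L : ℕ) : {w : W | cs.length w ≤ L}.Finite := by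
  apply Set.Finite.subset ((List.finite_length_le B L).image cs.wordProd)
  intro w hw
  obtain ⟨ω, hω1, hω2⟩ := cs.exists_reduced_word w
  exact ⟨ω, by simp only [Set.mem_setOf_eq] at hw ⊢; have := hω1.eq; rw [← hω2] at this; omega, hω2.symm⟩


/-! ### the main theorem -/

/-- the linear functional summing the coordinates -/
def f0 : (B → ℝ) →ₗ[ℝ] ℝ where
  toFun x := ∑ b, x b
  map_add' x y := by simp [Finset.sum_add_distrib]
  map_smul' c x := by simp [Finset.mul_sum]

lemma f0_pos {x : B → ℝ} (hx : Pos x) (hne : x ≠ 0) : 0 < f0 x := by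
  obtain ⟨b, hb⟩ := Function.ne_iff.mp hne
  exact Finset.sum_pos' (fun c _ => hx c)
    ⟨b, Finset.mem_univ b, lt_of_le_of_ne (hx b) (Ne.symm hb)⟩

theorem main (G : Subgroup W) (hG : (G : Set W).Finite) :
    ∃ (w : W) (T : Set B),
      (Subgroup.closure (cs.simple '' T) : Set W).Finite ∧
      ∀ g ∈ G, w * g * w⁻¹ ∈ Subgroup.closure (cs.simple '' T) := by
  classical
  set Gf : Finset W := hG.toFinset with hGf
  have hmemGf : ∀ g : W, g ∈ Gf ↔ g ∈ G := fun g => hG.mem_toFinset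
  have h1G : (1 : W) ∈ Gf := (hmemGf 1).mpr (one_mem G)
  set Y : (B → ℝ) →ₗ[ℝ] ℝ :=
    ∑ g ∈ Gf, (f0 (B := B)).comp (rho M cs g : (B → ℝ) →ₗ[ℝ] (B → ℝ)) with hY
  have hYapp : ∀ x, Y x = ∑ g ∈ Gf, f0 (rho M cs g x) := by
    intro x
    rw [hY, LinearMap.sum_apply]
    simp [LinearMap.comp_apply]
  have hYinv : ∀ h ∈ G, ∀ x, Y (rho M cs h x) = Y x := by
    intro h hh x
    rw [hYapp, hYapp]
    apply Finset.sum_equiv (Equiv.mulRight h)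
    · intro g
      simp only [Equiv.coe_mulRight, hmemGf]
      exact (mul_mem_cancel_right hh).symm
    · intro g _
      rw [← rho_mul_apply]
      simp [Equiv.coe_mulRight]
  -- every positive root on which `Y ∘ ρ w` is nonpositive lies in a finite set
  have hEfin : ∀ w : W,
      {γ | IsRoot M cs γ ∧ Pos γ ∧ Y (rho M cs w γ) ≤ 0}.Finite := by
    intro w
    apply Set.Finite.subset (Set.Finite.biUnion Gf.finite_toSet
      (fun g _ => NN_finite M cs (g * w)))
    intro γ ⟨hr, hp, hy⟩
    by_contra hnot
    simp only [Set.mem_iUnion, not_exists] at hnot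
    have hpos : ∀ g ∈ Gf, 0 < f0 (rho M cs g (rho M cs w γ)) := by
      intro g hg
      rw [← rho_mul_apply]
      have hroot : IsRoot M cs (rho M cs (g * w) γ) := isRoot_rho M cs (g * w) hr
      apply f0_pos _ (root_ne_zero M cs hroot)
      rcases root_trichotomy M cs hroot with h | h
      · exact h
      · exact absurd ⟨hr, hp, h⟩ (hnot g hg)
    have : 0 < Y (rho M cs w γ) := by
      rw [hYapp]
      exact Finset.sum_pos hpos ⟨1, h1G⟩
    linarith
  have hSfin : ∀ w : W,
      {γ | IsRoot M cs γ ∧ Pos γ ∧ Y (rho M cs w γ) < 0}.Finite := by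
    intro w
    apply (hEfin w).subset
    intro γ ⟨hr, hp, hy⟩
    exact ⟨hr, hp, le_of_lt hy⟩
  set S : W → Set (B → ℝ) :=
    fun w => {γ | IsRoot M cs γ ∧ Pos γ ∧ Y (rho M cs w γ) < 0} with hS
  -- choose w₀ minimizing the number of positive roots with negative value
  have hex : ∃ k, ∃ w : W, (S w).ncard = k := ⟨_, 1, rfl⟩
  obtain ⟨w₀, hw₀⟩ := Nat.find_spec hex
  -- all the simple roots have nonnegative value at w₀
  have hC : ∀ i, 0 ≤ Y (rho M cs w₀ (al i)) := by
    by_contra hcon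
    push_neg at hcon
    obtain ⟨i, hi⟩ := hcon
    have hSeq : S (w₀ * cs.simple i) = sigma M i '' (S w₀ \ {al i}) := by
      ext δ
      constructor
      · intro ⟨hr, hp, hy⟩
        rw [rho_mul_apply, rho_simple] at hy
        have hpσ : Pos (sigma M i δ) := by
          rcases root_trichotomy M cs (isRoot_sigma M cs i hr) with h | h
          · exact h
          · exfalso
            have hδal : δ = al i := flip_lemma M cs i hr hp h
            rw [hδal, sigma_al_self, map_neg, map_neg] at hy
            linarith
        refine ⟨sigma M i δ, ⟨⟨isRoot_sigma M cs i hr, hpσ, hy⟩, ?_⟩, sigma_sigma M i δ⟩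
        · intro hcon2
          rw [Set.mem_singleton_iff] at hcon2
          have : δ = sigma M i (al i) := by rw [← hcon2, sigma_sigma]
          rw [sigma_al_self] at this
          have h1 := hp i
          rw [this] at h1
          simp [al, Pi.single_apply] at h1
          linarith
      · rintro ⟨γ, ⟨⟨hr, hp, hy⟩, hne⟩, rfl⟩
        rw [Set.mem_singleton_iff] at hne
        have hpσ : Pos (sigma M i γ) := by
          rcases root_trichotomy M cs (isRoot_sigma M cs i hr) with h | h
          · exact h
          · exact absurd (flip_lemma M cs i hr hp h) hne
        refine ⟨isRoot_sigma M cs i hr, hpσ, ?_⟩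
        rw [rho_mul_apply, rho_simple, sigma_sigma]
        exact hy
    have halS : al i ∈ S w₀ := ⟨isRoot_al M cs i, Pos_al i, hi⟩
    have hcard : (S (w₀ * cs.simple i)).ncard < (S w₀).ncard := by
      rw [hSeq, Set.ncard_image_of_injective _ (sigma_injective M i)]
      exact Set.ncard_diff_singleton_lt_of_mem halS (hSfin w₀)
    have hle := Nat.find_min' hex ⟨w₀ * cs.simple i, rfl⟩
    omega
  -- the type of the parabolic
  set T : Set B := {i | Y (rho M cs w₀ (al i)) = 0} with hT
  -- expansion of the functional in coordinates
  have hYexp : ∀ x : B → ℝ, Y (rho M cs w₀ x) = ∑ b, x b * Y (rho M cs w₀ (al b)) := by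
    intro x
    have hx : x = ∑ b, x b • al b := by
      funext c
      rw [Finset.sum_apply]
      simp [al, Pi.single_apply]
    conv_lhs => rw [hx]
    rw [map_sum, map_sum]
    congr 1
    funext b
    rw [map_smul, map_smul, smul_eq_mul]
  have hNegle : ∀ x, Neg' x → Y (rho M cs w₀ x) ≤ 0 := by
    intro x hx
    rw [hYexp]
    apply Finset.sum_nonpos
    intro b _
    exact mul_nonpos_of_nonpos_of_nonneg (hx b) (hC b)
  have hsigmafix : ∀ i ∈ T, ∀ x, Y (rho M cs w₀ (sigma M i x)) = Y (rho M cs w₀ x) := by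
    intro i hiT x
    rw [sigma_apply, map_sub, map_sub, map_smul, map_smul, smul_eq_mul]
    have hiT' : Y (rho M cs w₀ (al i)) = 0 := hiT
    rw [hiT', mul_zero, sub_zero]
  -- the stabilizer
  set St : Set W := {u | ∀ x, Y (rho M cs w₀ (rho M cs u x)) = Y (rho M cs w₀ x)} with hSt
  have hclosureSt : ∀ u ∈ Subgroup.closure (cs.simple '' T), u ∈ St := by
    intro u hu
    induction hu using Subgroup.closure_induction with
    | mem g hg =>
      obtain ⟨i, hiT, rfl⟩ := hg
      intro x
      rw [rho_simple]
      exact hsigmafix i hiT x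
    | one => intro x; rw [map_one]; rfl
    | mul u v hu hv hu' hv' =>
      intro x
      rw [rho_mul_apply, hu' (rho M cs v x), hv' x]
    | inv u hu hu' =>
      intro x
      have := hu' (rho M cs u⁻¹ x)
      rw [rho_inv_apply' M cs u x] at this
      exact this.symm
  -- elements of the stabilizer have bounded length
  have hStlen : ∀ u ∈ St, cs.length u
      ≤ 2 * {γ | IsRoot M cs γ ∧ Pos γ ∧ Y (rho M cs w₀ γ) ≤ 0}.ncard := by
    intro u hu
    set Es := {γ | IsRoot M cs γ ∧ Pos γ ∧ Y (rho M cs w₀ γ) ≤ 0} with hEs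
    have hsub : NN M cs u ⊆ Es ∪ ((fun e => -(rho M cs u⁻¹ e)) '' Es) := by
      intro γ ⟨hr, hp, hn⟩
      have hYeq : Y (rho M cs w₀ (rho M cs u γ)) = Y (rho M cs w₀ γ) := hu γ
      by_cases hle : Y (rho M cs w₀ γ) ≤ 0
      · exact Or.inl ⟨hr, hp, hle⟩
      right
      push_neg at hle
      have hδroot : IsRoot M cs (-(rho M cs u γ)) := isRoot_neg M cs (isRoot_rho M cs u hr)
      have hδpos : Pos (-(rho M cs u γ)) := by
        intro b
        simpa using hn b
      have hδY : Y (rho M cs w₀ (-(rho M cs u γ))) ≤ 0 := by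
        rw [map_neg, map_neg, hYeq]
        linarith
      refine ⟨-(rho M cs u γ), ⟨hδroot, hδpos, hδY⟩, ?_⟩
      show -(rho M cs u⁻¹ (-(rho M cs u γ))) = γ
      rw [map_neg, rho_inv_apply, neg_neg]
    have h1 := length_le_ncard M cs u
    have h2 := Set.ncard_le_ncard hsub (((hEfin w₀).union ((hEfin w₀).image _)))
    have h3 := Set.ncard_union_le Es ((fun e => -(rho M cs u⁻¹ e)) '' Es)
    have h4 := Set.ncard_image_le (s := Es) (f := fun e => -(rho M cs u⁻¹ e)) (hEfin w₀)
    omega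
  -- conjugated subgroup elements lie in the stabilizer, hence in the parabolic
  have hstabmem : ∀ u ∈ St, u ∈ Subgroup.closure (cs.simple '' T) := by
    suffices h : ∀ (n : ℕ) (u : W), cs.length u = n → u ∈ St →
        u ∈ Subgroup.closure (cs.simple '' T) from fun u hu => h _ u rfl hu
    intro n
    induction n using Nat.strong_induction_on with
    | _ n IH =>
    intro u hn hu
    rcases eq_or_ne u 1 with rfl | hne
    · exact one_mem _
    obtain ⟨i, hi⟩ := cs.exists_rightDescent_of_ne_one hne
    have hneg : Neg' (rho M cs u (al i)) := keyT' M cs u i hi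
    have hle : Y (rho M cs w₀ (rho M cs u (al i))) ≤ 0 := hNegle _ hneg
    have hge : Y (rho M cs w₀ (rho M cs u (al i))) = Y (rho M cs w₀ (al i)) := hu (al i)
    have hiT : i ∈ T := by
      rw [hT, Set.mem_setOf_eq]
      have := hC i
      linarith [hge ▸ hle]
    have hu' : u * cs.simple i ∈ St := by
      intro x
      rw [rho_mul_apply, rho_simple, hu (sigma M i x), hsigmafix i hiT x]
    have hlen : cs.length (u * cs.simple i) < n := by rw [← hn]; exact hi
    have hmem' := IH _ hlen (u * cs.simple i) rfl hu'
    have : u = (u * cs.simple i) * cs.simple i := by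
      rw [mul_assoc, cs.simple_mul_simple_self, mul_one]
    rw [this]
    exact mul_mem hmem' (Subgroup.subset_closure ⟨i, hiT, rfl⟩)
  -- conclusion
  refine ⟨w₀⁻¹, T, ?_, ?_⟩
  · apply Set.Finite.subset (length_bounded_finite M cs
      (2 * {γ | IsRoot M cs γ ∧ Pos γ ∧ Y (rho M cs w₀ γ) ≤ 0}.ncard))
    intro u hu
    exact hStlen u (hclosureSt u hu)
  · intro g hg
    rw [inv_inv]
    apply hstabmem
    intro x
    have h1 : rho M cs (w₀⁻¹ * g * w₀) x = rho M cs w₀⁻¹ (rho M cs (g * w₀) x) := by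
      rw [← rho_mul_apply, mul_assoc]
    rw [h1]
    have h2 : rho M cs (g * w₀) x = rho M cs g (rho M cs w₀ x) := rho_mul_apply M cs g w₀ x
    rw [h2]
    have h3 := hYinv g hg (rho M cs w₀ x)
    calc Y (rho M cs w₀ (rho M cs w₀⁻¹ (rho M cs g (rho M cs w₀ x))))
        = Y (rho M cs g (rho M cs w₀ x)) := by rw [rho_inv_apply' M cs w₀]
      _ = Y (rho M cs w₀ x) := h3


end TitsAux
end

/-- In a Coxeter system with finitely many generators, every finite subgroup is conjugate to a
subgroup of a finite standard parabolic subgroup. -/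
theorem finite_subgroup_conjugate_into_finite_parabolic {B W : Type*} [Group W] [Finite B]
    (M : CoxeterMatrix B) (cs : CoxeterSystem M W)
    (G : Subgroup W) (hG : (G : Set W).Finite) :
    ∃ (w : W) (T : Set B),
      (Subgroup.closure (cs.simple '' T) : Set W).Finite ∧
      ∀ g ∈ G, w * g * w⁻¹ ∈ Subgroup.closure (cs.simple '' T) := by
  letI := Fintype.ofFinite B
  letI := Classical.decEq B
  exact TitsAux.main M cs G hG
end
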